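/- arXiv:2105.11774 — 4 statements merged into one kernel-verified Lean document; each statement's English description precedes it below -/
import Mathlib

section
/- Let (X,d) be a separable metric space and ν a Borel probability measure on X. Then: the upper packing dimension of ν equals inf{PD_d(B) : B Borel, ν(B)=1}; the lower packing dimension of ν equals inf{PD_d(B) : B Borel, ν(B)>0}; the upper Hausdorff dimension of ν equals inf{HD_d(B) : B Borel, ν(B)=1}; and the lower Hausdorff dimension of ν equals inf{HD_d(B) : B Borel, ν(B)>0}. -/
open Filter Metric Set MeasureTheory Topology
open scoped ENNReal NNReal

noncomputable section

namespace Paper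

variable {X : Type*} [MetricSpace X]

/-- Hausdorff `α`-content at scale `η`, using countable coverings by metric balls of radii
at most `η`. -/
def hContent (α η : ℝ) (B : Set X) : ℝ≥0∞ :=
  ⨅ (c : ℕ → X) (r : ℕ → ℝ) (_ : ∀ i, 0 < r i ∧ r i ≤ η)
    (_ : B ⊆ ⋃ i, Metric.ball (c i) (r i)),
    ∑' i, ENNReal.ofReal (r i ^ α)

/-- The Hausdorff `α`-measure (ball based, following the paper). -/
def hMeasure (α : ℝ) (B : Set X) : ℝ≥0∞ :=
  ⨆ (η : ℝ) (_ : 0 < η), hContent α η B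

/-- The Hausdorff dimension `HD_d(B)`: the critical exponent of `α ↦ hMeasure α B`. -/
def hDim (B : Set X) : EReal :=
  sInf {a : EReal | ∃ α : ℝ, a = (α : EReal) ∧ 0 ≤ α ∧ hMeasure α B = 0}

/-- The packing `α`-pre-measure `P^α_d(B)`, built from countable families of disjoint balls
with centers in `B` and radii at most `η`. -/
def packPre (α : ℝ) (B : Set X) : ℝ≥0∞ :=
  ⨅ (η : ℝ) (_ : 0 < η),
    ⨆ (I : Set ℕ) (c : ℕ → X) (r : ℕ → ℝ)
      (_ : ∀ i ∈ I, c i ∈ B ∧ 0 < r i ∧ r i ≤ η)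
      (_ : I.PairwiseDisjoint fun i => Metric.ball (c i) (r i)),
      ∑' i : I, ENNReal.ofReal (r (i : ℕ) ^ α)

/-- The packing `α`-measure `𝑃̂^α_d(B)`, obtained from the pre-measure by countable coverings. -/
def packMeasure (α : ℝ) (B : Set X) : ℝ≥0∞ :=
  ⨅ (C : ℕ → Set X) (_ : B ⊆ ⋃ k, C k), ∑' k, packPre α (C k)

/-- The packing dimension `PD_d(B)`: the critical exponent of `α ↦ packMeasure α B`. -/
def packDim (B : Set X) : EReal :=
  sInf {a : EReal | ∃ α : ℝ, a = (α : EReal) ∧ 0 ≤ α ∧ packMeasure α B = 0}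

/-- The lower local dimension `liminf_{r→0} log ν(B(y,r))/log r` of `ν` at `y`. -/
def locLower [MeasurableSpace X] (ν : Measure X) (y : X) : EReal :=
  liminf (fun r : ℝ => ((Real.log (ν (Metric.ball y r)).toReal / Real.log r : ℝ) : EReal))
    (nhdsWithin 0 (Set.Ioi 0))

/-- The upper local dimension `limsup_{r→0} log ν(B(y,r))/log r` of `ν` at `y`. -/
def locUpper [MeasurableSpace X] (ν : Measure X) (y : X) : EReal :=
  limsup (fun r : ℝ => ((Real.log (ν (Metric.ball y r)).toReal / Real.log r : ℝ) : EReal))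
    (nhdsWithin 0 (Set.Ioi 0))

end Paper

namespace PaperAux
open Paper

variable {X : Type*} [MetricSpace X]

lemma hContent_le {α η : ℝ} {B : Set X} (c : ℕ → X) (r : ℕ → ℝ)
    (h1 : ∀ i, 0 < r i ∧ r i ≤ η) (h2 : B ⊆ ⋃ i, ball (c i) (r i)) :
    hContent α η B ≤ ∑' i, ENNReal.ofReal (r i ^ α) :=
  iInf_le_of_le c <| iInf_le_of_le r <| iInf_le_of_le h1 <| iInf_le _ h2

lemma le_hContent {α η : ℝ} {B : Set X} {m : ℝ≥0∞}
    (h : ∀ (c : ℕ → X) (r : ℕ → ℝ), (∀ i, 0 < r i ∧ r i ≤ η) →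
      B ⊆ ⋃ i, ball (c i) (r i) → m ≤ ∑' i, ENNReal.ofReal (r i ^ α)) :
    m ≤ hContent α η B :=
  le_iInf fun c => le_iInf fun r => le_iInf fun h1 => le_iInf fun h2 => h c r h1 h2

lemma hContent_mono {α η : ℝ} {A B : Set X} (h : A ⊆ B) :
    hContent α η A ≤ hContent α η B :=
  le_iInf fun c => le_iInf fun r => le_iInf fun h1 => le_iInf fun h2 =>
    hContent_le c r h1 (h.trans h2)

lemma hMeasure_mono {α : ℝ} {A B : Set X} (h : A ⊆ B) : hMeasure α A ≤ hMeasure α B :=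
  iSup_mono fun _η => iSup_mono fun _ => hContent_mono h

lemma hContent_le_hMeasure (α : ℝ) {η : ℝ} (hη : 0 < η) (B : Set X) :
    hContent α η B ≤ hMeasure α B :=
  le_iSup_of_le η (le_iSup_of_le hη le_rfl)

lemma packPre_le_of {α : ℝ} {B : Set X} {η : ℝ} (hη : 0 < η) {m : ℝ≥0∞}
    (h : ∀ (I : Set ℕ) (c : ℕ → X) (r : ℕ → ℝ),
      (∀ i ∈ I, c i ∈ B ∧ 0 < r i ∧ r i ≤ η) →
      (I.PairwiseDisjoint fun i => ball (c i) (r i)) →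
      ∑' i : I, ENNReal.ofReal (r (i : ℕ) ^ α) ≤ m) :
    packPre α B ≤ m :=
  iInf_le_of_le η <| iInf_le_of_le hη <| iSup_le fun I => iSup_le fun c =>
    iSup_le fun r => iSup_le fun h1 => iSup_le fun h2 => h I c r h1 h2

lemma le_packPre {α : ℝ} {B : Set X} {m : ℝ≥0∞}
    (h : ∀ η : ℝ, 0 < η → ∃ (I : Set ℕ) (c : ℕ → X) (r : ℕ → ℝ),
      (∀ i ∈ I, c i ∈ B ∧ 0 < r i ∧ r i ≤ η) ∧
      (I.PairwiseDisjoint fun i => ball (c i) (r i)) ∧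
      m ≤ ∑' i : I, ENNReal.ofReal (r (i : ℕ) ^ α)) :
    m ≤ packPre α B :=
  le_iInf fun η => le_iInf fun hη => by
    obtain ⟨I, c, r, h1, h2, h3⟩ := h η hη
    exact h3.trans <| le_iSup_of_le I <| le_iSup_of_le c <| le_iSup_of_le r <|
      le_iSup_of_le h1 <| le_iSup_of_le h2 le_rfl

lemma packMeasure_le (α : ℝ) {B : Set X} (C : ℕ → Set X) (hC : B ⊆ ⋃ k, C k) :
    packMeasure α B ≤ ∑' k, packPre α (C k) :=
  iInf_le_of_le C (iInf_le _ hC)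

lemma le_packMeasure {α : ℝ} {B : Set X} {m : ℝ≥0∞}
    (h : ∀ C : ℕ → Set X, B ⊆ ⋃ k, C k → m ≤ ∑' k, packPre α (C k)) :
    m ≤ packMeasure α B :=
  le_iInf fun C => le_iInf fun hC => h C hC

lemma packMeasure_mono {α : ℝ} {A B : Set X} (h : A ⊆ B) :
    packMeasure α A ≤ packMeasure α B :=
  le_iInf fun C => le_iInf fun hC => packMeasure_le α C (h.trans hC)

lemma packDim_le {B : Set X} {t : ℝ} (ht : 0 ≤ t)
    (h : ∀ δ : ℝ, 0 < δ → packMeasure (t + δ) B = 0) : packDim B ≤ (t : EReal) := by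
  by_contra hlt
  push_neg at hlt
  obtain ⟨x, hx1, hx2⟩ := EReal.lt_iff_exists_real_btwn.1 hlt
  have htx : t < x := by exact_mod_cast hx1
  have hle : packDim B ≤ ((t + (x - t) : ℝ) : EReal) :=
    sInf_le ⟨t + (x - t), rfl, by linarith, h _ (by linarith)⟩
  rw [show t + (x - t) = x by ring] at hle
  exact absurd (hle.trans_lt hx2) (lt_irrefl _)

lemma hDim_le {B : Set X} {t : ℝ} (ht : 0 ≤ t)
    (h : ∀ δ : ℝ, 0 < δ → hMeasure (t + δ) B = 0) : hDim B ≤ (t : EReal) := by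
  by_contra hlt
  push_neg at hlt
  obtain ⟨x, hx1, hx2⟩ := EReal.lt_iff_exists_real_btwn.1 hlt
  have htx : t < x := by exact_mod_cast hx1
  have hle : hDim B ≤ ((t + (x - t) : ℝ) : EReal) :=
    sInf_le ⟨t + (x - t), rfl, by linarith, h _ (by linarith)⟩
  rw [show t + (x - t) = x by ring] at hle
  exact absurd (hle.trans_lt hx2) (lt_irrefl _)

lemma exists_of_packDim_lt {B : Set X} {v : EReal} (h : packDim B < v) :
    ∃ α : ℝ, 0 ≤ α ∧ packMeasure α B = 0 ∧ (α : EReal) < v := by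
  obtain ⟨a, ha, hav⟩ := sInf_lt_iff.1 h
  obtain ⟨α, rfl, h0, hm⟩ := ha
  exact ⟨α, h0, hm, hav⟩

lemma exists_of_hDim_lt {B : Set X} {v : EReal} (h : hDim B < v) :
    ∃ α : ℝ, 0 ≤ α ∧ hMeasure α B = 0 ∧ (α : EReal) < v := by
  obtain ⟨a, ha, hav⟩ := sInf_lt_iff.1 h
  obtain ⟨α, rfl, h0, hm⟩ := ha
  exact ⟨α, h0, hm, hav⟩

end PaperAux


section Chunk2
open Paper PaperAux
variable {X : Type*} [MetricSpace X] [MeasurableSpace X] [BorelSpace X]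
variable (ν : Measure X) [IsProbabilityMeasure ν]

namespace PaperAux

lemma toReal_measure_le_one (s : Set X) : (ν s).toReal ≤ 1 := by
  have h := prob_le_one (μ := ν) (s := s)
  calc (ν s).toReal ≤ (1 : ℝ≥0∞).toReal := ENNReal.toReal_mono ENNReal.one_ne_top h
    _ = 1 := by simp

lemma eventually_ratio_nonneg (y : X) :
    ∀ᶠ r in 𝓝[>] (0:ℝ), 0 ≤ Real.log (ν (ball y r)).toReal / Real.log r := by
  filter_upwards [Ioo_mem_nhdsGT_of_mem (⟨le_refl (0:ℝ), one_pos⟩ : (0:ℝ) ∈ Ico (0:ℝ) 1)]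
    with r hr
  have h1 : Real.log r < 0 := Real.log_neg hr.1 hr.2
  have h2 : Real.log (ν (ball y r)).toReal ≤ 0 :=
    Real.log_nonpos ENNReal.toReal_nonneg (toReal_measure_le_one ν _)
  exact div_nonneg_of_nonpos h2 h1.le

lemma locLower_nonneg (y : X) : (0 : EReal) ≤ locLower ν y := by
  refine le_liminf_of_le (by isBoundedDefault) ?_
  filter_upwards [eventually_ratio_nonneg ν y] with r hr
  exact_mod_cast hr

lemma locLower_le_locUpper (y : X) : locLower ν y ≤ locUpper ν y :=
  liminf_le_limsup (by isBoundedDefault) (by isBoundedDefault)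

lemma locUpper_nonneg (y : X) : (0 : EReal) ≤ locUpper ν y :=
  (locLower_nonneg ν y).trans (locLower_le_locUpper ν y)

lemma ratio_lt_imp {y : X} {r t : ℝ} (hr : r ∈ Ioo (0:ℝ) 1) (hν : ν (ball y r) ≠ 0)
    (h : Real.log (ν (ball y r)).toReal / Real.log r < t) :
    ENNReal.ofReal (r ^ t) ≤ ν (ball y r) := by
  have hlr : Real.log r < 0 := Real.log_neg hr.1 hr.2
  have hpos : 0 < (ν (ball y r)).toReal := ENNReal.toReal_pos hν (measure_ne_top ν _)
  have h2 : t * Real.log r < Real.log (ν (ball y r)).toReal := by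
    rw [div_lt_iff_of_neg hlr] at h; exact h
  have hrt : r ^ t = Real.exp (t * Real.log r) := by
    rw [Real.rpow_def_of_pos hr.1, mul_comm]
  have h3 : r ^ t < (ν (ball y r)).toReal := by
    rw [hrt, ← Real.exp_log hpos]
    exact Real.exp_lt_exp.2 h2
  calc ENNReal.ofReal (r ^ t) ≤ ENNReal.ofReal (ν (ball y r)).toReal :=
        ENNReal.ofReal_le_ofReal h3.le
    _ = ν (ball y r) := ENNReal.ofReal_toReal (measure_ne_top ν _)

lemma lt_ratio_imp {y : X} {r t : ℝ} (hr : r ∈ Ioo (0:ℝ) 1) (ht : 0 ≤ t)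
    (h : t < Real.log (ν (ball y r)).toReal / Real.log r) :
    ν (ball y r) < ENNReal.ofReal (r ^ t) := by
  have hlr : Real.log r < 0 := Real.log_neg hr.1 hr.2
  have hν : ν (ball y r) ≠ 0 := by
    intro h0
    rw [h0] at h
    simp only [ENNReal.toReal_zero, Real.log_zero, zero_div] at h
    exact absurd (ht.trans_lt h) (lt_irrefl _)
  have hpos : 0 < (ν (ball y r)).toReal := ENNReal.toReal_pos hν (measure_ne_top ν _)
  have h2 : Real.log (ν (ball y r)).toReal < t * Real.log r := by
    rw [lt_div_iff_of_neg hlr] at h; exact h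
  have hrt : r ^ t = Real.exp (t * Real.log r) := by
    rw [Real.rpow_def_of_pos hr.1, mul_comm]
  have h3 : (ν (ball y r)).toReal < r ^ t := by
    rw [hrt, ← Real.exp_log hpos]
    exact Real.exp_lt_exp.2 h2
  calc ν (ball y r) = ENNReal.ofReal (ν (ball y r)).toReal :=
        (ENNReal.ofReal_toReal (measure_ne_top ν _)).symm
    _ < ENNReal.ofReal (r ^ t) :=
        (ENNReal.ofReal_lt_ofReal_iff (lt_of_le_of_lt ENNReal.toReal_nonneg h3)).2 h3

lemma eventually_density_of_locUpper_lt {y : X} {t : ℝ}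
    (hy : ∀ r : ℝ, 0 < r → ν (ball y r) ≠ 0) (h : locUpper ν y < (t : EReal)) :
    ∀ᶠ r in 𝓝[>] (0:ℝ), ENNReal.ofReal (r ^ t) ≤ ν (ball y r) := by
  have h1 := eventually_lt_of_limsup_lt h
  filter_upwards [h1, Ioo_mem_nhdsGT_of_mem (⟨le_refl (0:ℝ), one_pos⟩ : (0:ℝ) ∈ Ico (0:ℝ) 1)]
    with r hr1 hr2
  exact ratio_lt_imp ν hr2 (hy r hr2.1) (by exact_mod_cast hr1)

lemma frequently_density_of_lt_locUpper {y : X} {t : ℝ} (ht : 0 ≤ t)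
    (h : (t : EReal) < locUpper ν y) :
    ∃ᶠ r in 𝓝[>] (0:ℝ), ν (ball y r) < ENNReal.ofReal (r ^ t) := by
  have h1 := frequently_lt_of_lt_limsup (by isBoundedDefault) h
  refine (h1.and_eventually
    (Ioo_mem_nhdsGT_of_mem (⟨le_refl (0:ℝ), one_pos⟩ : (0:ℝ) ∈ Ico (0:ℝ) 1))).mono ?_
  rintro r ⟨hr1, hr2⟩
  exact lt_ratio_imp ν hr2 ht (by exact_mod_cast hr1)

lemma frequently_density_of_locLower_lt {y : X} {t : ℝ}
    (hy : ∀ r : ℝ, 0 < r → ν (ball y r) ≠ 0) (h : locLower ν y < (t : EReal)) :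
    ∃ᶠ r in 𝓝[>] (0:ℝ), ENNReal.ofReal (r ^ t) ≤ ν (ball y r) := by
  have h1 := frequently_lt_of_liminf_lt (by isBoundedDefault) h
  refine (h1.and_eventually
    (Ioo_mem_nhdsGT_of_mem (⟨le_refl (0:ℝ), one_pos⟩ : (0:ℝ) ∈ Ico (0:ℝ) 1))).mono ?_
  rintro r ⟨hr1, hr2⟩
  exact ratio_lt_imp ν hr2 (hy r hr2.1) (by exact_mod_cast hr1)

lemma eventually_density_of_lt_locLower {y : X} {t : ℝ} (ht : 0 ≤ t)
    (h : (t : EReal) < locLower ν y) :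
    ∀ᶠ r in 𝓝[>] (0:ℝ), ν (ball y r) < ENNReal.ofReal (r ^ t) := by
  have h1 := eventually_lt_of_lt_liminf h
  filter_upwards [h1, Ioo_mem_nhdsGT_of_mem (⟨le_refl (0:ℝ), one_pos⟩ : (0:ℝ) ∈ Ico (0:ℝ) 1)]
    with r hr1 hr2
  exact lt_ratio_imp ν hr2 ht (by exact_mod_cast hr1)

lemma frequently_small {P : ℝ → Prop} (h : ∃ᶠ r in 𝓝[>] (0:ℝ), P r) {ε : ℝ} (hε : 0 < ε) :
    ∃ r, 0 < r ∧ r < ε ∧ P r := by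
  obtain ⟨r, hr, h2⟩ := (h.and_eventually (Ioo_mem_nhdsGT_of_mem ⟨le_refl (0:ℝ), hε⟩)).exists
  exact ⟨r, h2.1, h2.2, hr⟩

lemma eventually_small {P : ℝ → Prop} (h : ∀ᶠ r in 𝓝[>] (0:ℝ), P r) :
    ∃ ε : ℝ, 0 < ε ∧ ∀ r, 0 < r → r < ε → P r := by
  obtain ⟨u, hu, hsub⟩ := mem_nhdsGT_iff_exists_Ioo_subset.1 h
  exact ⟨u, hu, fun r h1 h2 => hsub ⟨h1, h2⟩⟩

lemma ae_ball_pos [TopologicalSpace.SeparableSpace X] :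
    ∀ᵐ y ∂ν, ∀ r : ℝ, 0 < r → ν (ball y r) ≠ 0 := by
  haveI : SecondCountableTopology X :=
    UniformSpace.secondCountable_of_separable X
  obtain ⟨b, hbc, -, hbb⟩ := TopologicalSpace.exists_countable_basis X
  set N := ⋃₀ {U ∈ b | ν U = 0} with hN
  have hNnull : ν N = 0 := by
    rw [hN]
    exact (measure_sUnion_null_iff (hbc.mono (sep_subset _ _))).2 fun U hU => hU.2
  rw [ae_iff]
  refine measure_mono_null ?_ hNnull
  intro y hy
  simp only [mem_setOf_eq, not_forall] at hy
  obtain ⟨r, hr, hball⟩ := hy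
  push_neg at hball
  obtain ⟨V, hVb, hyV, hVsub⟩ := hbb.exists_subset_of_mem_open (mem_ball_self hr) isOpen_ball
  have hV0 : ν V = 0 := le_antisymm (le_trans (measure_mono hVsub) hball.le) zero_le
  exact ⟨V, ⟨hVb, hV0⟩, hyV⟩

end PaperAux
end Chunk2
section Chunk3
open Paper PaperAux
variable {X : Type*} [MetricSpace X] [MeasurableSpace X] [BorelSpace X]
variable (ν : Measure X) [IsProbabilityMeasure ν]

namespace PaperAux

omit [MeasurableSpace X] [BorelSpace X] in
lemma vitali_pack [Nonempty X] [TopologicalSpace.SeparableSpace X] {E : Set X} {η : ℝ}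
    (P : X → ℝ → Prop) (hE : ∀ y ∈ E, ∃ ρ : ℝ, 0 < ρ ∧ ρ ≤ η ∧ P y ρ) :
    ∃ (I : Set ℕ) (c : ℕ → X) (ρ : ℕ → ℝ),
      (∀ i ∈ I, c i ∈ E ∧ 0 < ρ i ∧ ρ i ≤ η ∧ P (c i) (ρ i)) ∧
      (I.PairwiseDisjoint fun i => closedBall (c i) (ρ i)) ∧
      E ⊆ ⋃ i ∈ I, closedBall (c i) (4 * ρ i) := by
  classical
  set t : Set (X × ℝ) := {p | p.1 ∈ E ∧ 0 < p.2 ∧ p.2 ≤ η ∧ P p.1 p.2} with ht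
  obtain ⟨u, hut, hdisj, hcov⟩ :=
    Vitali.exists_disjoint_subfamily_covering_enlargement_closedBall t Prod.fst Prod.snd η
      (fun a ha => ha.2.2.1) 4 (by norm_num)
  have hcovE : ∀ y ∈ E, ∃ b ∈ u, y ∈ closedBall b.1 (4 * b.2) := by
    intro y hy
    obtain ⟨ρ, hρ1, hρ2, hρ3⟩ := hE y hy
    obtain ⟨b, hb, hsub⟩ := hcov (y, ρ) ⟨hy, hρ1, hρ2, hρ3⟩
    exact ⟨b, hb, hsub (mem_closedBall_self hρ1.le)⟩
  have hucnt : u.Countable := by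
    apply Set.PairwiseDisjoint.countable_of_nonempty_interior hdisj
    intro p hp
    have hppos : 0 < p.2 := (hut hp).2.1
    exact ⟨p.1, interior_maximal ball_subset_closedBall isOpen_ball (mem_ball_self hppos)⟩
  rcases u.eq_empty_or_nonempty with hu | hu
  · refine ⟨∅, fun _ => Classical.arbitrary X, fun _ => 1, by simp, by simp, ?_⟩
    intro y hy
    obtain ⟨b, hb, -⟩ := hcovE y hy
    rw [hu] at hb
    exact absurd hb (notMem_empty b)
  · obtain ⟨f, hf⟩ := hucnt.exists_eq_range hu
    set I : Set ℕ := {i | ∀ j, j < i → f j ≠ f i} with hI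
    have hmemu : ∀ i, f i ∈ u := fun i => by rw [hf]; exact mem_range_self i
    refine ⟨I, fun i => (f i).1, fun i => (f i).2, ?_, ?_, ?_⟩
    · intro i _
      exact hut (hmemu i)
    · intro i _ j hj hij
      have hne : f i ≠ f j := by
        rcases lt_or_gt_of_ne hij with h | h
        · exact fun he => (hj i h) he
        · exact fun he => (Set.mem_setOf_eq ▸ ‹i ∈ I›) j h he.symm
      exact hdisj (hmemu i) (hmemu j) hne
    · intro y hy
      obtain ⟨b, hb, hyb⟩ := hcovE y hy
      rw [hf] at hb
      obtain ⟨i₀, rfl⟩ := hb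
      have hex : ∃ i, f i = f i₀ := ⟨i₀, rfl⟩
      have hfi : f (Nat.find hex) = f i₀ := Nat.find_spec hex
      have hiI : Nat.find hex ∈ I := by
        intro j hj he
        exact Nat.find_min hex hj (he.trans hfi)
      refine mem_biUnion hiI ?_
      simpa [hfi] using hyb

lemma isClosed_le_measure_closedBall (q : ℝ) (c : ℝ≥0∞) :
    IsClosed {y : X | c ≤ ν (closedBall y q)} := by
  rw [← isOpen_compl_iff, Metric.isOpen_iff]
  intro y hy
  simp only [mem_compl_iff, mem_setOf_eq, not_le] at hy
  have hmono : Antitone (fun n : ℕ => closedBall y (q + 1/(n+1))) := by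
    intro m n hmn
    apply closedBall_subset_closedBall
    have h1 : (1:ℝ)/(n+1) ≤ 1/(m+1) := by
      apply one_div_le_one_div_of_le
      · positivity
      · exact_mod_cast Nat.succ_le_succ hmn
    linarith
  have hiInter : ⋂ n : ℕ, closedBall y (q + 1/(n+1)) = closedBall y q := by
    apply Subset.antisymm
    · intro z hz
      simp only [mem_iInter, mem_closedBall] at hz ⊢
      refine le_of_forall_pos_le_add fun ε hε => ?_
      obtain ⟨n, hn⟩ := exists_nat_one_div_lt hε
      have := hz n
      linarith
    · intro z hz
      simp only [mem_iInter, mem_closedBall] at hz ⊢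
      intro n
      have : (0:ℝ) < 1/(n+1) := by positivity
      linarith [hz]
  have htend := tendsto_measure_iInter_atTop (μ := ν)
    (fun n => measurableSet_closedBall.nullMeasurableSet) hmono ⟨0, measure_ne_top ν _⟩
  rw [hiInter] at htend
  have hev : ∀ᶠ n : ℕ in atTop, ν (closedBall y (q + 1/(n+1))) < c :=
    htend.eventually_lt_const hy
  obtain ⟨n, hn⟩ := hev.exists
  refine ⟨1/(n+1), by positivity, ?_⟩
  intro y' hy'
  simp only [mem_compl_iff, mem_setOf_eq, not_le]
  refine lt_of_le_of_lt (measure_mono ?_) hn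
  apply closedBall_subset_closedBall'
  have := mem_ball.1 hy'
  linarith

end PaperAux

namespace PaperAux

/-- The closed sets witnessing a uniform lower density bound. -/
def Fset (t : ℝ) (n : ℕ) : Set X :=
  ⋂ (q : ℚ) (_ : 0 < (q:ℝ)) (_ : (q:ℝ) ≤ 1/(n+1)),
    {y : X | ENNReal.ofReal ((q:ℝ) ^ t) ≤ ν (closedBall y (q:ℝ))}

/-- The Borel sets witnessing recurrent lower density bounds. -/
def Eset (t : ℝ) : Set X :=
  ⋂ (n : ℕ), ⋃ (q : ℚ) (_ : 0 < (q:ℝ)) (_ : (q:ℝ) ≤ 1/(n+1)),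
    {y : X | ENNReal.ofReal ((q:ℝ) ^ t) ≤ ν (closedBall y (q:ℝ))}

lemma measurableSet_Fset (t : ℝ) (n : ℕ) : MeasurableSet (Fset ν t n) :=
  MeasurableSet.iInter fun q => MeasurableSet.iInter fun _ => MeasurableSet.iInter fun _ =>
    (isClosed_le_measure_closedBall ν _ _).measurableSet

lemma measurableSet_Eset (t : ℝ) : MeasurableSet (Eset ν t) :=
  MeasurableSet.iInter fun n => MeasurableSet.iUnion fun q => MeasurableSet.iUnion fun _ =>
    MeasurableSet.iUnion fun _ => (isClosed_le_measure_closedBall ν _ _).measurableSet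

lemma mem_Fset_iff {t : ℝ} {n : ℕ} {y : X} :
    y ∈ Fset ν t n ↔ ∀ q : ℚ, 0 < (q:ℝ) → (q:ℝ) ≤ 1/(n+1) →
      ENNReal.ofReal ((q:ℝ) ^ t) ≤ ν (closedBall y (q:ℝ)) := by
  simp [Fset]

lemma mem_Eset_iff {t : ℝ} {y : X} :
    y ∈ Eset ν t ↔ ∀ n : ℕ, ∃ q : ℚ, 0 < (q:ℝ) ∧ (q:ℝ) ≤ 1/(n+1) ∧
      ENNReal.ofReal ((q:ℝ) ^ t) ≤ ν (closedBall y (q:ℝ)) := by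
  simp only [Eset, mem_iInter, mem_iUnion, mem_setOf_eq, exists_prop]

end PaperAux
end Chunk3
section Chunk4
open Paper PaperAux
variable {X : Type*} [MetricSpace X] [MeasurableSpace X] [BorelSpace X]
variable (ν : Measure X) [IsProbabilityMeasure ν]

namespace PaperAux

lemma packPre_Fset_eq_zero {t δ : ℝ} (ht : 0 ≤ t) (hδ : 0 < δ) (n : ℕ) :
    packPre (t + δ) (Fset ν t n) = 0 := by
  refine le_antisymm ?_ zero_le
  refine ENNReal.le_of_forall_pos_le_add fun ε hε _ => ?_
  rw [zero_add]
  have hεR : (0:ℝ) < ε := hε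
  have h2t : (0:ℝ) < 2 ^ t := Real.rpow_pos_of_pos two_pos t
  set a : ℝ := ((ε : ℝ) / 2 ^ t) ^ (1/δ) with ha_def
  have ha : 0 < a := Real.rpow_pos_of_pos (div_pos hεR h2t) _
  set η : ℝ := min (min 1 (1/(n+1))) a with hη_def
  have hη : 0 < η := lt_min (lt_min one_pos (by positivity)) ha
  refine packPre_le_of hη ?_
  intro I c r h1 h2
  have key : ∀ i : I, ENNReal.ofReal (r (i:ℕ) ^ (t + δ)) ≤
      ENNReal.ofReal (2 ^ t * η ^ δ) * ν (ball (c (i:ℕ)) (r (i:ℕ))) := by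
    rintro ⟨i, hi⟩
    obtain ⟨hc, hr0, hrη⟩ := h1 i hi
    obtain ⟨q, hq1, hq2⟩ := exists_rat_btwn (show r i / 2 < r i by linarith)
    have hq0 : 0 < (q:ℝ) := lt_trans (by linarith) hq1
    have hqn : (q:ℝ) ≤ 1/(n+1) :=
      hq2.le.trans (hrη.trans ((min_le_left _ _).trans (min_le_right _ _)))
    have hmem := (mem_Fset_iff ν).1 hc q hq0 hqn
    have hν : ENNReal.ofReal ((q:ℝ) ^ t) ≤ ν (ball (c i) (r i)) :=
      hmem.trans (measure_mono (closedBall_subset_ball hq2))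
    have harith : r i ^ (t + δ) ≤ (2 ^ t * η ^ δ) * (q:ℝ) ^ t := by
      rw [Real.rpow_add hr0]
      have hb1 : r i ^ t ≤ (2*(q:ℝ)) ^ t := Real.rpow_le_rpow hr0.le (by linarith) ht
      have hb2 : r i ^ δ ≤ η ^ δ := Real.rpow_le_rpow hr0.le hrη hδ.le
      have hmul := mul_le_mul hb1 hb2 (Real.rpow_nonneg hr0.le δ)
        (Real.rpow_nonneg (by positivity) t)
      rw [Real.mul_rpow (by norm_num) hq0.le] at hmul
      calc r i ^ t * r i ^ δ ≤ 2 ^ t * (q:ℝ) ^ t * (η ^ δ) := hmul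
        _ = 2 ^ t * η ^ δ * (q:ℝ) ^ t := by ring
    calc ENNReal.ofReal (r i ^ (t+δ))
        ≤ ENNReal.ofReal ((2^t * η^δ) * (q:ℝ)^t) := ENNReal.ofReal_le_ofReal harith
      _ = ENNReal.ofReal (2^t*η^δ) * ENNReal.ofReal ((q:ℝ)^t) :=
          ENNReal.ofReal_mul (by positivity)
      _ ≤ ENNReal.ofReal (2^t*η^δ) * ν (ball (c i) (r i)) := mul_le_mul_right hν _
  calc ∑' i : I, ENNReal.ofReal (r (i:ℕ) ^ (t+δ))
      ≤ ∑' i : I, ENNReal.ofReal (2^t*η^δ) * ν (ball (c (i:ℕ)) (r (i:ℕ))) :=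
        ENNReal.tsum_le_tsum key
    _ = ENNReal.ofReal (2^t*η^δ) * ∑' i : I, ν (ball (c (i:ℕ)) (r (i:ℕ))) :=
        ENNReal.tsum_mul_left
    _ ≤ ENNReal.ofReal (2^t*η^δ) * 1 := by
        apply mul_le_mul_right
        rw [← measure_biUnion (Set.to_countable I) h2 (fun i _ => measurableSet_ball)]
        exact prob_le_one
    _ ≤ (ε : ℝ≥0∞) := by
        rw [mul_one]
        have hηa : η ≤ a := min_le_right _ _
        have hb1 : η ^ δ ≤ a ^ δ := Real.rpow_le_rpow hη.le hηa hδ.le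
        have hb2 : a ^ δ = (ε:ℝ)/2^t := by
          rw [ha_def, ← Real.rpow_mul (div_pos hεR h2t).le, one_div,
            inv_mul_cancel₀ hδ.ne', Real.rpow_one]
        have hfinal : 2^t * η^δ ≤ (ε:ℝ) := by
          have := mul_le_mul_of_nonneg_left hb1 h2t.le
          rw [hb2] at this
          calc (2:ℝ)^t * η^δ ≤ 2^t * ((ε:ℝ)/2^t) := this
            _ = (ε:ℝ) := by field_simp
        calc ENNReal.ofReal (2^t*η^δ) ≤ ENNReal.ofReal (ε:ℝ) :=
            ENNReal.ofReal_le_ofReal hfinal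
          _ = (ε : ℝ≥0∞) := ENNReal.ofReal_coe_nnreal

lemma packMeasure_iUnion_Fset {t δ : ℝ} (ht : 0 ≤ t) (hδ : 0 < δ) :
    packMeasure (t + δ) (⋃ n, Fset ν t n) = 0 := by
  refine le_antisymm ?_ zero_le
  calc packMeasure (t+δ) (⋃ n, Fset ν t n) ≤ ∑' n, packPre (t+δ) (Fset ν t n) :=
      packMeasure_le _ _ subset_rfl
    _ = 0 := by simp [packPre_Fset_eq_zero ν ht hδ]

lemma packDim_iUnion_Fset {t : ℝ} (ht : 0 ≤ t) :
    packDim (⋃ n, Fset ν t n) ≤ (t : EReal) :=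
  packDim_le ht fun _δ hδ => packMeasure_iUnion_Fset ν ht hδ

lemma mem_iUnion_Fset_of_locUpper_lt {t : ℝ} {y : X}
    (hy : ∀ r : ℝ, 0 < r → ν (ball y r) ≠ 0) (h : locUpper ν y < (t : EReal)) :
    y ∈ ⋃ n, Fset ν t n := by
  obtain ⟨ε, hε, hub⟩ := eventually_small (eventually_density_of_locUpper_lt ν hy h)
  obtain ⟨n, hn⟩ := exists_nat_one_div_lt hε
  refine mem_iUnion.2 ⟨n, (mem_Fset_iff ν).2 fun q hq0 hqn => ?_⟩
  have hlt : (q:ℝ) < ε := lt_of_le_of_lt hqn hn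
  exact (hub (q:ℝ) hq0 hlt).trans (measure_mono ball_subset_closedBall)

lemma packMeasure_pos_of_lt_locUpper [TopologicalSpace.SeparableSpace X] {t : ℝ} (ht : 0 ≤ t)
    {A : Set X} (hA : ∀ y ∈ A, (t : EReal) < locUpper ν y) (hpos : 0 < ν A) :
    0 < packMeasure t A := by
  have hAne : A.Nonempty := nonempty_of_measure_ne_zero hpos.ne'
  haveI : Nonempty X := ⟨hAne.some⟩
  set K : ℝ≥0∞ := ENNReal.ofReal (5 ^ t) with hK
  have hK0 : K ≠ 0 := by
    simp only [hK, ne_eq, ENNReal.ofReal_eq_zero, not_le]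
    exact Real.rpow_pos_of_pos (by norm_num) t
  have hKtop : K ≠ ⊤ := ENNReal.ofReal_ne_top
  have main : ν A * K⁻¹ ≤ packMeasure t A := by
    refine le_packMeasure fun C hC => ?_
    have hsum : ν A ≤ ∑' k, ν (C k ∩ A) := by
      calc ν A ≤ ν (⋃ k, C k ∩ A) := by
            refine measure_mono fun y hy => ?_
            obtain ⟨_, ⟨k, rfl⟩, hk⟩ := hC hy
            exact mem_iUnion.2 ⟨k, hk, hy⟩
        _ ≤ ∑' k, ν (C k ∩ A) := measure_iUnion_le _
    have hper : ∀ k, ν (C k ∩ A) * K⁻¹ ≤ packPre t (C k) := by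
      intro k
      refine le_packPre fun η hη => ?_
      have hEd : ∀ y ∈ C k ∩ A, ∃ ρ : ℝ, 0 < ρ ∧ ρ ≤ η ∧
          ν (closedBall y (4*ρ)) ≤ ENNReal.ofReal ((5*ρ)^t) := by
        intro y hy
        have hfreq := frequently_density_of_lt_locUpper ν ht (hA y hy.2)
        obtain ⟨r, hr0, hrlt, hrP⟩ := frequently_small hfreq (show (0:ℝ) < 5*η by positivity)
        refine ⟨r/5, by positivity, by linarith, ?_⟩
        have hsub : closedBall y (4*(r/5)) ⊆ ball y r := closedBall_subset_ball (by linarith)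
        rw [show 5*(r/5) = r by ring]
        exact (measure_mono hsub).trans hrP.le
      obtain ⟨I, c, ρ, hP, hdisj, hcov⟩ := vitali_pack (η := η) _ hEd
      refine ⟨I, c, ρ, fun i hi => ⟨(hP i hi).1.1, (hP i hi).2.1, (hP i hi).2.2.1⟩,
        fun i hi j hj hij =>
          ((hdisj hi hj hij).mono ball_subset_closedBall ball_subset_closedBall), ?_⟩
      have h1 : ν (C k ∩ A) ≤ ∑' i : I, ν (closedBall (c (i:ℕ)) (4 * ρ (i:ℕ))) :=
        (measure_mono hcov).trans (measure_biUnion_le ν (Set.to_countable I) _)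
      have h2 : ∑' i : I, ν (closedBall (c (i:ℕ)) (4 * ρ (i:ℕ))) ≤
          K * ∑' i : I, ENNReal.ofReal (ρ (i:ℕ) ^ t) := by
        rw [← ENNReal.tsum_mul_left]
        refine ENNReal.tsum_le_tsum fun i => ?_
        calc ν (closedBall (c (i:ℕ)) (4 * ρ (i:ℕ)))
            ≤ ENNReal.ofReal ((5 * ρ (i:ℕ))^t) := (hP i i.2).2.2.2
          _ = K * ENNReal.ofReal (ρ (i:ℕ) ^ t) := by
              rw [Real.mul_rpow (by norm_num) (hP i i.2).2.1.le,
                ENNReal.ofReal_mul (Real.rpow_nonneg (by norm_num) t)]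
      calc ν (C k ∩ A) * K⁻¹
          ≤ (K * ∑' i : I, ENNReal.ofReal (ρ (i:ℕ) ^ t)) * K⁻¹ :=
            mul_le_mul_left (h1.trans h2) _
        _ = (∑' i : I, ENNReal.ofReal (ρ (i:ℕ) ^ t)) * (K * K⁻¹) := by ring
        _ = ∑' i : I, ENNReal.ofReal (ρ (i:ℕ) ^ t) := by
            rw [ENNReal.mul_inv_cancel hK0 hKtop, mul_one]
    calc ν A * K⁻¹ ≤ (∑' k, ν (C k ∩ A)) * K⁻¹ := mul_le_mul_left hsum _
      _ = ∑' k, ν (C k ∩ A) * K⁻¹ := ENNReal.tsum_mul_right.symm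
      _ ≤ ∑' k, packPre t (C k) := ENNReal.tsum_le_tsum hper
  refine lt_of_lt_of_le ?_ main
  exact ENNReal.mul_pos hpos.ne' (ENNReal.inv_ne_zero.2 hKtop)

end PaperAux
end Chunk4
section Chunk5
open Paper PaperAux
variable {X : Type*} [MetricSpace X] [MeasurableSpace X] [BorelSpace X]
variable (ν : Measure X) [IsProbabilityMeasure ν]

namespace PaperAux

lemma hMeasure_pos_of_lt_locLower {t : ℝ} (ht : 0 ≤ t) {A : Set X}
    (hA : ∀ y ∈ A, (t : EReal) < locLower ν y) (hpos : 0 < ν A) :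
    0 < hMeasure t A := by
  set An : ℕ → Set X := fun n =>
    {y ∈ A | ∀ r : ℝ, 0 < r → r ≤ 1/(n+1) → ν (ball y r) ≤ ENNReal.ofReal (r^t)} with hAn
  have hcup : A ⊆ ⋃ n, An n := by
    intro y hy
    obtain ⟨ε, hε, hev⟩ := eventually_small (eventually_density_of_lt_locLower ν ht (hA y hy))
    obtain ⟨n, hn⟩ := exists_nat_one_div_lt hε
    exact mem_iUnion.2 ⟨n, hy, fun r h1 h2 => (hev r h1 (lt_of_le_of_lt h2 hn)).le⟩
  have hex : ∃ n, ν (An n) ≠ 0 := by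
    by_contra h
    push_neg at h
    have hA0 : ν A = 0 :=
      le_antisymm ((measure_mono hcup).trans ((measure_iUnion_le _).trans (by simp [h])))
        zero_le
    exact absurd hA0 hpos.ne'
  obtain ⟨n, hn⟩ := hex
  set K : ℝ≥0∞ := ENNReal.ofReal (2^t) with hK
  have hK0 : K ≠ 0 := by
    simp only [hK, ne_eq, ENNReal.ofReal_eq_zero, not_le]
    exact Real.rpow_pos_of_pos two_pos t
  have hKtop : K ≠ ⊤ := ENNReal.ofReal_ne_top
  have hηpos : (0:ℝ) < 1/(2*(n+1)) := by positivity
  have hcont : ν (An n) * K⁻¹ ≤ hContent t (1/(2*(n+1))) (An n) := by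
    refine le_hContent fun c r h1 h2 => ?_
    have hperball : ∀ i, ν (An n ∩ ball (c i) (r i)) ≤ K * ENNReal.ofReal (r i ^ t) := by
      intro i
      rcases (An n ∩ ball (c i) (r i)).eq_empty_or_nonempty with he | ⟨y, hy⟩
      · simp [he]
      · have hsub : An n ∩ ball (c i) (r i) ⊆ ball y (2 * r i) := by
          intro z hz
          have h3 := mem_ball.1 hz.2
          have h4 := mem_ball.1 hy.2
          rw [mem_ball]
          calc dist z y ≤ dist z (c i) + dist (c i) y := dist_triangle _ _ _
            _ = dist z (c i) + dist y (c i) := by rw [dist_comm (c i) y]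
            _ < 2 * r i := by linarith
        have h2r : (0:ℝ) < 2 * r i := by linarith [(h1 i).1]
        have h2rn : 2 * r i ≤ 1/(n+1) := by
          have hb := (h1 i).2
          have : (2:ℝ) * (1/(2*(n+1))) = 1/(n+1) := by field_simp
          linarith
        have hym := hy.1.2 (2*r i) h2r h2rn
        calc ν (An n ∩ ball (c i) (r i)) ≤ ν (ball y (2*r i)) := measure_mono hsub
          _ ≤ ENNReal.ofReal ((2*r i)^t) := hym
          _ = K * ENNReal.ofReal (r i ^ t) := by
              rw [Real.mul_rpow (by norm_num) (h1 i).1.le,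
                ENNReal.ofReal_mul (Real.rpow_nonneg (by norm_num) _)]
    have hA_le : ν (An n) ≤ K * ∑' i, ENNReal.ofReal (r i ^ t) := by
      calc ν (An n) ≤ ν (⋃ i, An n ∩ ball (c i) (r i)) := by
            refine measure_mono fun y hy => ?_
            obtain ⟨i, hi⟩ := mem_iUnion.1 (h2 hy)
            exact mem_iUnion.2 ⟨i, hy, hi⟩
        _ ≤ ∑' i, ν (An n ∩ ball (c i) (r i)) := measure_iUnion_le _
        _ ≤ ∑' i, K * ENNReal.ofReal (r i ^ t) := ENNReal.tsum_le_tsum hperball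
        _ = K * ∑' i, ENNReal.ofReal (r i ^ t) := ENNReal.tsum_mul_left
    calc ν (An n) * K⁻¹ ≤ (K * ∑' i, ENNReal.ofReal (r i ^ t)) * K⁻¹ :=
        mul_le_mul_left hA_le _
      _ = (∑' i, ENNReal.ofReal (r i ^ t)) * (K * K⁻¹) := by ring
      _ = ∑' i, ENNReal.ofReal (r i ^ t) := by
          rw [ENNReal.mul_inv_cancel hK0 hKtop, mul_one]
  have hpos2 : (0:ℝ≥0∞) < ν (An n) * K⁻¹ :=
    ENNReal.mul_pos hn (ENNReal.inv_ne_zero.2 hKtop)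
  calc (0:ℝ≥0∞) < ν (An n) * K⁻¹ := hpos2
    _ ≤ hContent t (1/(2*(n+1))) (An n) := hcont
    _ ≤ hMeasure t (An n) := hContent_le_hMeasure _ hηpos _
    _ ≤ hMeasure t A := hMeasure_mono fun y hy => hy.1

lemma mem_Eset_of_locLower_lt {t' t : ℝ} (h0 : 0 < t') (htt : t' < t) {y : X}
    (hy : ∀ r : ℝ, 0 < r → ν (ball y r) ≠ 0) (h : locLower ν y < (t' : EReal)) :
    y ∈ Eset ν t := by
  have ht : 0 < t := h0.trans htt
  rw [mem_Eset_iff]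
  intro n
  have hfreq := frequently_density_of_locLower_lt ν hy h
  set β : ℝ := t'/t with hβ
  have hβ0 : 0 < β := div_pos h0 ht
  have hβ1 : β < 1 := (div_lt_one ht).2 htt
  have hbnd : (0:ℝ) < min 1 (min (1/((n:ℝ)+1)) ((1/((n:ℝ)+1)) ^ (1/β))) := by
    refine lt_min one_pos (lt_min (by positivity) ?_)
    exact Real.rpow_pos_of_pos (by positivity) _
  obtain ⟨r, hr0, hrlt, hrP⟩ := frequently_small hfreq hbnd
  have hr1 : r < 1 := lt_of_lt_of_le hrlt (min_le_left _ _)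
  have hrn : r < (1/((n:ℝ)+1)) ^ (1/β) :=
    lt_of_lt_of_le hrlt ((min_le_right _ _).trans (min_le_right _ _))
  have hrβ : r < r ^ β := by
    have := Real.rpow_lt_rpow_of_exponent_gt hr0 hr1 hβ1
    rwa [Real.rpow_one] at this
  have hrβn : r ^ β ≤ 1/((n:ℝ)+1) := by
    have h1 : r ^ β ≤ ((1/((n:ℝ)+1)) ^ (1/β)) ^ β := Real.rpow_le_rpow hr0.le hrn.le hβ0.le
    have h2 : ((1/((n:ℝ)+1)) ^ (1/β)) ^ β = 1/((n:ℝ)+1) := by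
      rw [← Real.rpow_mul (by positivity), one_div_mul_cancel hβ0.ne', Real.rpow_one]
    rwa [h2] at h1
  obtain ⟨q, hq1, hq2⟩ := exists_rat_btwn hrβ
  have hq0 : 0 < (q:ℝ) := hr0.trans hq1
  refine ⟨q, hq0, hq2.le.trans hrβn, ?_⟩
  have hqt : (q:ℝ) ^ t ≤ r ^ t' := by
    have h1 : (q:ℝ) ^ t ≤ (r ^ β) ^ t := Real.rpow_le_rpow hq0.le hq2.le ht.le
    rwa [← Real.rpow_mul hr0.le, hβ, div_mul_cancel₀ _ ht.ne'] at h1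
  calc ENNReal.ofReal ((q:ℝ)^t) ≤ ENNReal.ofReal (r ^ t') := ENNReal.ofReal_le_ofReal hqt
    _ ≤ ν (ball y r) := hrP
    _ ≤ ν (closedBall y (q:ℝ)) :=
        measure_mono ((ball_subset_ball hq1.le).trans ball_subset_closedBall)
end PaperAux
end Chunk5
section Chunk6
open Paper PaperAux
variable {X : Type*} [MetricSpace X] [MeasurableSpace X] [BorelSpace X]
variable (ν : Measure X) [IsProbabilityMeasure ν]

namespace PaperAux

lemma hContent_Eset_eq_zero [TopologicalSpace.SeparableSpace X] {t δ η' : ℝ} (ht : 0 ≤ t)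
    (hδ : 0 < δ) (hη' : 0 < η') : hContent (t + δ) η' (Eset ν t) = 0 := by
  classical
  haveI : Nonempty X := by
    obtain ⟨x, -⟩ := nonempty_of_measure_ne_zero
      (show ν univ ≠ 0 by simp [measure_univ])
    exact ⟨x⟩
  set s : ℝ := t + δ with hs_def
  have hs : 0 < s := by positivity
  refine le_antisymm ?_ zero_le
  refine ENNReal.le_of_forall_pos_le_add fun ε hε _ => ?_
  rw [zero_add]
  have hεR : (0:ℝ) < ε := hε
  set b : ℝ := (2:ℝ)⁻¹ ^ s with hb_def
  have hb0 : 0 < b := Real.rpow_pos_of_pos (by norm_num) s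
  have hb1 : b < 1 := Real.rpow_lt_one (by norm_num) (by norm_num) hs
  set G : ℝ≥0∞ := (1 - ENNReal.ofReal b)⁻¹ with hG_def
  have hGtop : G ≠ ⊤ := by
    refine ENNReal.inv_ne_top.2 ?_
    rw [← pos_iff_ne_zero, tsub_pos_iff_lt]
    exact ENNReal.ofReal_lt_one.2 hb1
  set g : ℝ := G.toReal + 1 with hg_def
  have hg0 : 0 < g := by positivity
  have hGg : G ≤ ENNReal.ofReal g := by
    rw [hg_def]
    calc G = ENNReal.ofReal G.toReal := (ENNReal.ofReal_toReal hGtop).symm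
      _ ≤ ENNReal.ofReal (G.toReal + 1) := ENNReal.ofReal_le_ofReal (by linarith)
  set m : ℝ := min (η'/2) (((ε:ℝ)/(2*g)) ^ (1/s)) with hm_def
  have hm0 : 0 < m := lt_min (by positivity) (Real.rpow_pos_of_pos (by positivity) _)
  have hms : m ^ s ≤ (ε:ℝ)/(2*g) := by
    have h1 : m ^ s ≤ (((ε:ℝ)/(2*g)) ^ (1/s)) ^ s :=
      Real.rpow_le_rpow hm0.le (min_le_right _ _) hs.le
    rwa [← Real.rpow_mul (by positivity), one_div_mul_cancel hs.ne', Real.rpow_one] at h1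
  have h5s : (0:ℝ) < 5 ^ s := Real.rpow_pos_of_pos (by norm_num) s
  set η : ℝ := min (η'/5) (((ε:ℝ)/(2*5^s)) ^ (1/δ)) with hη_def
  have hη0 : 0 < η := lt_min (by positivity) (Real.rpow_pos_of_pos (by positivity) _)
  have hηδ : 5^s * η ^ δ ≤ (ε:ℝ)/2 := by
    have h1 : η ^ δ ≤ (((ε:ℝ)/(2*5^s)) ^ (1/δ)) ^ δ :=
      Real.rpow_le_rpow hη0.le (min_le_right _ _) hδ.le
    rw [← Real.rpow_mul (by positivity), one_div_mul_cancel hδ.ne', Real.rpow_one] at h1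
    have h2 : 5^s * η^δ ≤ 5^s * ((ε:ℝ)/(2*5^s)) := mul_le_mul_of_nonneg_left h1 h5s.le
    calc (5:ℝ)^s * η^δ ≤ 5^s * ((ε:ℝ)/(2*5^s)) := h2
      _ = (ε:ℝ)/2 := by field_simp
  have hEd : ∀ y ∈ Eset ν t, ∃ ρ : ℝ, 0 < ρ ∧ ρ ≤ η ∧
      ENNReal.ofReal (ρ ^ t) ≤ ν (closedBall y ρ) := by
    intro y hy
    obtain ⟨n, hn⟩ := exists_nat_one_div_lt hη0
    obtain ⟨q, hq0, hqn, hqd⟩ := (mem_Eset_iff ν).1 hy n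
    exact ⟨(q:ℝ), hq0, (hqn.trans hn.le), hqd⟩
  obtain ⟨I, c, ρ, hP, hdisj, hcov⟩ := vitali_pack (η := η) _ hEd
  set c' : ℕ → X := fun i => if i ∈ I then c i else Classical.arbitrary X with hc'_def
  set r' : ℕ → ℝ := fun i => if i ∈ I then 5 * ρ i else m * (2:ℝ)⁻¹ ^ i with hr'_def
  have h1 : ∀ i, 0 < r' i ∧ r' i ≤ η' := by
    intro i
    by_cases hi : i ∈ I
    · have hPi := hP i hi
      constructor
      · simp only [hr'_def, if_pos hi]; linarith [hPi.2.1]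
      · simp only [hr'_def, if_pos hi]
        have hρη : ρ i ≤ η := hPi.2.2.1
        have hη5 : η ≤ η'/5 := min_le_left _ _
        linarith
    · constructor
      · simp only [hr'_def, if_neg hi]; positivity
      · simp only [hr'_def, if_neg hi]
        have hpow : (2:ℝ)⁻¹ ^ i ≤ 1 := pow_le_one₀ (by norm_num) (by norm_num)
        have hb : m * (2:ℝ)⁻¹ ^ i ≤ m * 1 := mul_le_mul_of_nonneg_left hpow hm0.le
        have hmη : m ≤ η'/2 := min_le_left _ _
        linarith
  have h2 : Eset ν t ⊆ ⋃ i, ball (c' i) (r' i) := by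
    intro y hy
    obtain ⟨i, hiI, hyi⟩ := mem_iUnion₂.1 (hcov hy)
    refine mem_iUnion.2 ⟨i, ?_⟩
    have hρ0 := (hP i hiI).2.1
    have hball : y ∈ ball (c i) (5 * ρ i) :=
      lt_of_le_of_lt (mem_closedBall.1 hyi) (by linarith)
    simpa only [hc'_def, hr'_def, if_pos hiI] using hball
  calc hContent (t+δ) η' (Eset ν t) ≤ ∑' i, ENNReal.ofReal (r' i ^ (t+δ)) :=
      hContent_le c' r' h1 h2
    _ ≤ ∑' i, (I.indicator (fun i => ENNReal.ofReal ((5 * ρ i) ^ s)) i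
          + ENNReal.ofReal ((m * (2:ℝ)⁻¹ ^ i) ^ s)) := by
        refine ENNReal.tsum_le_tsum fun i => ?_
        by_cases hi : i ∈ I
        · simp only [hr'_def, if_pos hi, indicator_of_mem hi, ← hs_def]
          exact le_add_of_le_of_nonneg le_rfl zero_le
        · simp only [hr'_def, if_neg hi, indicator_of_notMem hi, ← hs_def, zero_add]
          exact le_rfl
    _ = (∑' i, I.indicator (fun i => ENNReal.ofReal ((5 * ρ i) ^ s)) i)
          + ∑' i, ENNReal.ofReal ((m * (2:ℝ)⁻¹ ^ i) ^ s) := ENNReal.tsum_add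
    _ ≤ ENNReal.ofReal ((ε:ℝ)/2) + ENNReal.ofReal ((ε:ℝ)/2) := by
        refine add_le_add ?_ ?_
        · rw [← tsum_subtype I (fun i => ENNReal.ofReal ((5 * ρ i) ^ s))]
          have hterm : ∀ i : I, ENNReal.ofReal ((5 * ρ (i:ℕ)) ^ s) ≤
              ENNReal.ofReal (5^s * η^δ) * ν (closedBall (c (i:ℕ)) (ρ (i:ℕ))) := by
            rintro ⟨i, hi⟩
            obtain ⟨-, hρ0, hρη, hρν⟩ := hP i hi
            have harith : (5 * ρ i) ^ s ≤ (5^s * η^δ) * ρ i ^ t := by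
              rw [Real.mul_rpow (by norm_num) hρ0.le, hs_def, Real.rpow_add hρ0]
              have hb2 : ρ i ^ δ ≤ η ^ δ := Real.rpow_le_rpow hρ0.le hρη hδ.le
              have hρt : (0:ℝ) ≤ ρ i ^ t := Real.rpow_nonneg hρ0.le _
              calc (5:ℝ)^s * (ρ i ^ t * ρ i ^ δ) = (5^s * ρ i ^ δ) * ρ i ^ t := by ring
                _ ≤ (5^s * η^δ) * ρ i ^ t := by
                    apply mul_le_mul_of_nonneg_right _ hρt
                    exact mul_le_mul_of_nonneg_left hb2 h5s.le
            calc ENNReal.ofReal ((5 * ρ i) ^ s)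
                ≤ ENNReal.ofReal ((5^s * η^δ) * ρ i ^ t) := ENNReal.ofReal_le_ofReal harith
              _ = ENNReal.ofReal (5^s * η^δ) * ENNReal.ofReal (ρ i ^ t) := by
                  rw [ENNReal.ofReal_mul (by positivity)]
              _ ≤ ENNReal.ofReal (5^s * η^δ) * ν (closedBall (c i) (ρ i)) :=
                  mul_le_mul_right hρν _
          calc ∑' i : I, ENNReal.ofReal ((5 * ρ (i:ℕ)) ^ s)
              ≤ ∑' i : I, ENNReal.ofReal (5^s * η^δ) * ν (closedBall (c (i:ℕ)) (ρ (i:ℕ))) :=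
                ENNReal.tsum_le_tsum hterm
            _ = ENNReal.ofReal (5^s * η^δ) * ∑' i : I, ν (closedBall (c (i:ℕ)) (ρ (i:ℕ))) :=
                ENNReal.tsum_mul_left
            _ ≤ ENNReal.ofReal (5^s * η^δ) * 1 := by
                apply mul_le_mul_right
                rw [← measure_biUnion (Set.to_countable I) hdisj
                  (fun i _ => measurableSet_closedBall)]
                exact prob_le_one
            _ ≤ ENNReal.ofReal ((ε:ℝ)/2) := by
                rw [mul_one]
                exact ENNReal.ofReal_le_ofReal hηδ
        · have hterm : ∀ i : ℕ, ENNReal.ofReal ((m * (2:ℝ)⁻¹ ^ i) ^ s) =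
              ENNReal.ofReal (m ^ s) * ENNReal.ofReal b ^ i := by
            intro i
            have hpow : ((2:ℝ)⁻¹ ^ i) ^ s = b ^ i := by
              rw [← Real.rpow_natCast ((2:ℝ)⁻¹) i, ← Real.rpow_natCast b i, hb_def,
                ← Real.rpow_mul (by norm_num), ← Real.rpow_mul (by norm_num), mul_comm]
            rw [Real.mul_rpow hm0.le (by positivity), hpow,
              ENNReal.ofReal_mul (Real.rpow_nonneg hm0.le _), ENNReal.ofReal_pow hb0.le]
          calc ∑' i, ENNReal.ofReal ((m * (2:ℝ)⁻¹ ^ i) ^ s)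
              = ∑' i, ENNReal.ofReal (m ^ s) * ENNReal.ofReal b ^ i := tsum_congr hterm
            _ = ENNReal.ofReal (m ^ s) * ∑' i, ENNReal.ofReal b ^ i := ENNReal.tsum_mul_left
            _ = ENNReal.ofReal (m ^ s) * G := by rw [ENNReal.tsum_geometric, hG_def]
            _ ≤ ENNReal.ofReal ((ε:ℝ)/(2*g)) * ENNReal.ofReal g :=
                mul_le_mul' (ENNReal.ofReal_le_ofReal hms) hGg
            _ = ENNReal.ofReal ((ε:ℝ)/(2*g) * g) := by
                rw [ENNReal.ofReal_mul (by positivity)]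
            _ = ENNReal.ofReal ((ε:ℝ)/2) := by
                congr 1
                field_simp
    _ = ENNReal.ofReal ((ε:ℝ)/2 + (ε:ℝ)/2) :=
        (ENNReal.ofReal_add (by positivity) (by positivity)).symm
    _ = (ε : ℝ≥0∞) := by
        rw [show (ε:ℝ)/2 + (ε:ℝ)/2 = (ε:ℝ) by ring, ENNReal.ofReal_coe_nnreal]

lemma hMeasure_Eset_eq_zero [TopologicalSpace.SeparableSpace X] {t δ : ℝ} (ht : 0 ≤ t)
    (hδ : 0 < δ) : hMeasure (t + δ) (Eset ν t) = 0 := by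
  refine le_antisymm ?_ zero_le
  refine iSup_le fun η' => iSup_le fun hη' => ?_
  exact (hContent_Eset_eq_zero ν ht hδ hη').le

lemma hDim_Eset_le [TopologicalSpace.SeparableSpace X] {t : ℝ} (ht : 0 ≤ t) :
    hDim (Eset ν t) ≤ (t : EReal) :=
  hDim_le ht fun _δ hδ => hMeasure_Eset_eq_zero ν ht hδ

end PaperAux
end Chunk6
section Chunk7
open Paper PaperAux
variable {X : Type*} [MetricSpace X] [TopologicalSpace.SeparableSpace X]
  [MeasurableSpace X] [BorelSpace X]
variable (ν : Measure X) [IsProbabilityMeasure ν]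

namespace PaperAux

lemma essInf_locUpper_nonneg : (0 : EReal) ≤ essInf (locUpper ν) ν :=
  le_liminf_of_le (by isBoundedDefault) (Eventually.of_forall fun y => locUpper_nonneg ν y)

lemma essInf_locLower_nonneg : (0 : EReal) ≤ essInf (locLower ν) ν :=
  le_liminf_of_le (by isBoundedDefault) (Eventually.of_forall fun y => locLower_nonneg ν y)

lemma essSup_locUpper_nonneg : (0 : EReal) ≤ essSup (locUpper ν) ν := by
  haveI : (ae ν).NeBot := ae_neBot.2 (IsProbabilityMeasure.ne_zero ν)
  exact (essInf_locUpper_nonneg ν).trans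
    (liminf_le_limsup (by isBoundedDefault) (by isBoundedDefault))

lemma essSup_locLower_nonneg : (0 : EReal) ≤ essSup (locLower ν) ν := by
  haveI : (ae ν).NeBot := ae_neBot.2 (IsProbabilityMeasure.ne_zero ν)
  exact (essInf_locLower_nonneg ν).trans
    (liminf_le_limsup (by isBoundedDefault) (by isBoundedDefault))

lemma prob_compl_zero {B : Set X} (hB : MeasurableSet B) (hB1 : ν B = 1) : ν Bᶜ = 0 := by
  rw [measure_compl hB (measure_ne_top ν B), hB1, measure_univ, tsub_self]

lemma eq_one_of_compl_zero {B : Set X} (hB : MeasurableSet B) (hBc : ν Bᶜ = 0) : ν B = 1 := by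
  have h := measure_compl hB (measure_ne_top ν B)
  rw [hBc, measure_univ] at h
  exact le_antisymm prob_le_one (tsub_eq_zero_iff_le.1 h.symm)

/-- Statement for the upper packing dimension. -/
lemma essSup_locUpper_eq :
    essSup (locUpper ν) ν = ⨅ (B : Set X) (_ : MeasurableSet B) (_ : ν B = 1), packDim B := by
  apply le_antisymm
  · refine le_iInf fun B => le_iInf fun hB => le_iInf fun hB1 => ?_
    by_contra hlt
    push_neg at hlt
    obtain ⟨α, hα0, hαm, hαlt⟩ := exists_of_packDim_lt hlt
    have hne : ν {y | (α : EReal) < locUpper ν y} ≠ 0 := by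
      intro h0
      have hae : ∀ᵐ y ∂ν, locUpper ν y ≤ (α : EReal) := by
        rw [ae_iff]
        simpa only [not_le] using h0
      have hle : essSup (locUpper ν) ν ≤ (α : EReal) :=
        limsup_le_of_le (by isBoundedDefault) hae
      exact absurd (hle.trans_lt hαlt) (lt_irrefl _)
    have hposA : 0 < ν (B ∩ {y | (α : EReal) < locUpper ν y}) := by
      have hsub : {y | (α : EReal) < locUpper ν y} ⊆
          (B ∩ {y | (α : EReal) < locUpper ν y}) ∪ Bᶜ := by
        intro y hy
        by_cases hyB : y ∈ B
        · exact Or.inl ⟨hyB, hy⟩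
        · exact Or.inr hyB
      have h1 : ν {y | (α : EReal) < locUpper ν y} ≤
          ν (B ∩ {y | (α : EReal) < locUpper ν y}) := by
        calc ν {y | (α : EReal) < locUpper ν y}
            ≤ ν ((B ∩ {y | (α : EReal) < locUpper ν y}) ∪ Bᶜ) := measure_mono hsub
          _ ≤ ν (B ∩ {y | (α : EReal) < locUpper ν y}) + ν Bᶜ := measure_union_le _ _
          _ = ν (B ∩ {y | (α : EReal) < locUpper ν y}) := by
              rw [prob_compl_zero ν hB hB1, add_zero]
      exact lt_of_lt_of_le (pos_iff_ne_zero.2 hne) h1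
    have hpos2 := packMeasure_pos_of_lt_locUpper ν hα0 (fun y hy => hy.2) hposA
    have h2 : packMeasure α (B ∩ {y | (α : EReal) < locUpper ν y}) ≤ packMeasure α B :=
      packMeasure_mono inter_subset_left
    rw [hαm] at h2
    exact absurd (lt_of_lt_of_le hpos2 h2) (lt_irrefl _)
  · rcases eq_or_ne (essSup (locUpper ν) ν) ⊤ with htop | htop
    · rw [htop]; exact le_top
    · by_contra hlt
      push_neg at hlt
      obtain ⟨t, ht1, ht2⟩ := EReal.lt_iff_exists_real_btwn.1 hlt
      have ht0 : 0 ≤ t := by exact_mod_cast (essSup_locUpper_nonneg ν).trans ht1.le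
      have hmem : ∀ᵐ y ∂ν, y ∈ ⋃ n, Fset ν t n := by
        filter_upwards [ae_ball_pos ν, ae_le_essSup (μ := ν) (f := locUpper ν)] with y hy1 hy2
        exact mem_iUnion_Fset_of_locUpper_lt ν hy1 (hy2.trans_lt ht1)
      have hν1 : ν (⋃ n, Fset ν t n) = 1 := by
        refine eq_one_of_compl_zero ν (MeasurableSet.iUnion (measurableSet_Fset ν t)) ?_
        exact ae_iff.1 hmem
      have hchain : (⨅ (B : Set X) (_ : MeasurableSet B) (_ : ν B = 1), packDim B) ≤
          packDim (⋃ n, Fset ν t n) :=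
        iInf_le_of_le _ (iInf_le_of_le (MeasurableSet.iUnion (measurableSet_Fset ν t))
          (iInf_le _ hν1))
      have hfin := hchain.trans (packDim_iUnion_Fset ν ht0)
      exact absurd (lt_of_le_of_lt hfin ht2) (lt_irrefl _)

/-- Statement for the lower packing dimension. -/
lemma essInf_locUpper_eq :
    essInf (locUpper ν) ν = ⨅ (B : Set X) (_ : MeasurableSet B) (_ : 0 < ν B), packDim B := by
  apply le_antisymm
  · refine le_iInf fun B => le_iInf fun hB => le_iInf fun hBpos => ?_
    by_contra hlt
    push_neg at hlt
    obtain ⟨α, hα0, hαm, hαlt⟩ := exists_of_packDim_lt hlt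
    have hnull : ν {y | locUpper ν y ≤ (α : EReal)} = 0 := by
      have hae := ae_lt_of_lt_essInf hαlt
      rw [ae_iff] at hae
      simpa only [not_lt] using hae
    have hposA : 0 < ν (B ∩ {y | (α : EReal) < locUpper ν y}) := by
      have hsub : B ⊆ (B ∩ {y | (α : EReal) < locUpper ν y}) ∪
          {y | locUpper ν y ≤ (α : EReal)} := by
        intro y hy
        by_cases hyα : (α : EReal) < locUpper ν y
        · exact Or.inl ⟨hy, hyα⟩
        · exact Or.inr (not_lt.1 hyα)
      have h1 : ν B ≤ ν (B ∩ {y | (α : EReal) < locUpper ν y}) := by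
        calc ν B ≤ ν ((B ∩ {y | (α : EReal) < locUpper ν y}) ∪
              {y | locUpper ν y ≤ (α : EReal)}) := measure_mono hsub
          _ ≤ ν (B ∩ {y | (α : EReal) < locUpper ν y}) +
              ν {y | locUpper ν y ≤ (α : EReal)} := measure_union_le _ _
          _ = ν (B ∩ {y | (α : EReal) < locUpper ν y}) := by rw [hnull, add_zero]
      exact lt_of_lt_of_le hBpos h1
    have hpos2 := packMeasure_pos_of_lt_locUpper ν hα0 (fun y hy => hy.2) hposA
    have h2 : packMeasure α (B ∩ {y | (α : EReal) < locUpper ν y}) ≤ packMeasure α B :=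
      packMeasure_mono inter_subset_left
    rw [hαm] at h2
    exact absurd (lt_of_lt_of_le hpos2 h2) (lt_irrefl _)
  · rcases eq_or_ne (essInf (locUpper ν) ν) ⊤ with htop | htop
    · rw [htop]; exact le_top
    · by_contra hlt
      push_neg at hlt
      obtain ⟨t, ht1, ht2⟩ := EReal.lt_iff_exists_real_btwn.1 hlt
      have ht0 : 0 ≤ t := by exact_mod_cast (essInf_locUpper_nonneg ν).trans ht1.le
      have hne : ν {y | locUpper ν y < (t : EReal)} ≠ 0 := by
        intro h0
        have hae : ∀ᵐ y ∂ν, (t : EReal) ≤ locUpper ν y := by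
          rw [ae_iff]
          simpa only [not_le] using h0
        have := le_liminf_of_le (by isBoundedDefault) hae
        exact absurd (lt_of_le_of_lt this ht1) (lt_irrefl _)
      have hN : ν {y : X | ¬ ∀ r : ℝ, 0 < r → ν (ball y r) ≠ 0} = 0 :=
        ae_iff.1 (ae_ball_pos ν)
      have hsub : {y | locUpper ν y < (t : EReal)} ⊆
          (⋃ n, Fset ν t n) ∪ {y : X | ¬ ∀ r : ℝ, 0 < r → ν (ball y r) ≠ 0} := by
        intro y hy
        by_cases hyg : ∀ r : ℝ, 0 < r → ν (ball y r) ≠ 0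
        · exact Or.inl (mem_iUnion_Fset_of_locUpper_lt ν hyg hy)
        · exact Or.inr hyg
      have hpos : 0 < ν (⋃ n, Fset ν t n) := by
        rw [pos_iff_ne_zero]
        intro h0
        have h1 : ν {y | locUpper ν y < (t : EReal)} = 0 := by
          refine le_antisymm ?_ zero_le
          calc ν {y | locUpper ν y < (t : EReal)}
              ≤ ν ((⋃ n, Fset ν t n) ∪ {y : X | ¬ ∀ r : ℝ, 0 < r → ν (ball y r) ≠ 0}) :=
                measure_mono hsub
            _ ≤ ν (⋃ n, Fset ν t n) +
                ν {y : X | ¬ ∀ r : ℝ, 0 < r → ν (ball y r) ≠ 0} := measure_union_le _ _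
            _ = 0 := by rw [h0, hN, add_zero]
        exact hne h1
      have hchain : (⨅ (B : Set X) (_ : MeasurableSet B) (_ : 0 < ν B), packDim B) ≤
          packDim (⋃ n, Fset ν t n) :=
        iInf_le_of_le _ (iInf_le_of_le (MeasurableSet.iUnion (measurableSet_Fset ν t))
          (iInf_le _ hpos))
      have hfin := hchain.trans (packDim_iUnion_Fset ν ht0)
      exact absurd (lt_of_le_of_lt hfin ht2) (lt_irrefl _)

/-- Statement for the upper Hausdorff dimension. -/
lemma essSup_locLower_eq :
    essSup (locLower ν) ν = ⨅ (B : Set X) (_ : MeasurableSet B) (_ : ν B = 1), hDim B := by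
  apply le_antisymm
  · refine le_iInf fun B => le_iInf fun hB => le_iInf fun hB1 => ?_
    by_contra hlt
    push_neg at hlt
    obtain ⟨α, hα0, hαm, hαlt⟩ := exists_of_hDim_lt hlt
    have hne : ν {y | (α : EReal) < locLower ν y} ≠ 0 := by
      intro h0
      have hae : ∀ᵐ y ∂ν, locLower ν y ≤ (α : EReal) := by
        rw [ae_iff]
        simpa only [not_le] using h0
      have hle : essSup (locLower ν) ν ≤ (α : EReal) :=
        limsup_le_of_le (by isBoundedDefault) hae
      exact absurd (hle.trans_lt hαlt) (lt_irrefl _)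
    have hposA : 0 < ν (B ∩ {y | (α : EReal) < locLower ν y}) := by
      have hsub : {y | (α : EReal) < locLower ν y} ⊆
          (B ∩ {y | (α : EReal) < locLower ν y}) ∪ Bᶜ := by
        intro y hy
        by_cases hyB : y ∈ B
        · exact Or.inl ⟨hyB, hy⟩
        · exact Or.inr hyB
      have h1 : ν {y | (α : EReal) < locLower ν y} ≤
          ν (B ∩ {y | (α : EReal) < locLower ν y}) := by
        calc ν {y | (α : EReal) < locLower ν y}
            ≤ ν ((B ∩ {y | (α : EReal) < locLower ν y}) ∪ Bᶜ) := measure_mono hsub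
          _ ≤ ν (B ∩ {y | (α : EReal) < locLower ν y}) + ν Bᶜ := measure_union_le _ _
          _ = ν (B ∩ {y | (α : EReal) < locLower ν y}) := by
              rw [prob_compl_zero ν hB hB1, add_zero]
      exact lt_of_lt_of_le (pos_iff_ne_zero.2 hne) h1
    have hpos2 := hMeasure_pos_of_lt_locLower ν hα0 (fun y hy => hy.2) hposA
    have h2 : hMeasure α (B ∩ {y | (α : EReal) < locLower ν y}) ≤ hMeasure α B :=
      hMeasure_mono inter_subset_left
    rw [hαm] at h2
    exact absurd (lt_of_lt_of_le hpos2 h2) (lt_irrefl _)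
  · rcases eq_or_ne (essSup (locLower ν) ν) ⊤ with htop | htop
    · rw [htop]; exact le_top
    · by_contra hlt
      push_neg at hlt
      obtain ⟨t, ht1, ht2⟩ := EReal.lt_iff_exists_real_btwn.1 hlt
      obtain ⟨t', ht'1, ht'2⟩ := EReal.lt_iff_exists_real_btwn.1 ht1
      have ht'0 : 0 < t' := by
        have h := (essSup_locLower_nonneg ν).trans_lt ht'1
        exact_mod_cast h
      have htt' : t' < t := by exact_mod_cast ht'2
      have ht0 : 0 ≤ t := (ht'0.trans htt').le
      have hmem : ∀ᵐ y ∂ν, y ∈ Eset ν t := by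
        filter_upwards [ae_ball_pos ν, ae_le_essSup (μ := ν) (f := locLower ν)] with y hy1 hy2
        exact mem_Eset_of_locLower_lt ν ht'0 htt' hy1 (hy2.trans_lt ht'1)
      have hν1 : ν (Eset ν t) = 1 :=
        eq_one_of_compl_zero ν (measurableSet_Eset ν t) (ae_iff.1 hmem)
      have hchain : (⨅ (B : Set X) (_ : MeasurableSet B) (_ : ν B = 1), hDim B) ≤
          hDim (Eset ν t) :=
        iInf_le_of_le _ (iInf_le_of_le (measurableSet_Eset ν t) (iInf_le _ hν1))
      have hfin := hchain.trans (hDim_Eset_le ν ht0)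
      exact absurd (lt_of_le_of_lt hfin ht2) (lt_irrefl _)

/-- Statement for the lower Hausdorff dimension. -/
lemma essInf_locLower_eq :
    essInf (locLower ν) ν = ⨅ (B : Set X) (_ : MeasurableSet B) (_ : 0 < ν B), hDim B := by
  apply le_antisymm
  · refine le_iInf fun B => le_iInf fun hB => le_iInf fun hBpos => ?_
    by_contra hlt
    push_neg at hlt
    obtain ⟨α, hα0, hαm, hαlt⟩ := exists_of_hDim_lt hlt
    have hnull : ν {y | locLower ν y ≤ (α : EReal)} = 0 := by
      have hae := ae_lt_of_lt_essInf hαlt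
      rw [ae_iff] at hae
      simpa only [not_lt] using hae
    have hposA : 0 < ν (B ∩ {y | (α : EReal) < locLower ν y}) := by
      have hsub : B ⊆ (B ∩ {y | (α : EReal) < locLower ν y}) ∪
          {y | locLower ν y ≤ (α : EReal)} := by
        intro y hy
        by_cases hyα : (α : EReal) < locLower ν y
        · exact Or.inl ⟨hy, hyα⟩
        · exact Or.inr (not_lt.1 hyα)
      have h1 : ν B ≤ ν (B ∩ {y | (α : EReal) < locLower ν y}) := by
        calc ν B ≤ ν ((B ∩ {y | (α : EReal) < locLower ν y}) ∪
              {y | locLower ν y ≤ (α : EReal)}) := measure_mono hsub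
          _ ≤ ν (B ∩ {y | (α : EReal) < locLower ν y}) +
              ν {y | locLower ν y ≤ (α : EReal)} := measure_union_le _ _
          _ = ν (B ∩ {y | (α : EReal) < locLower ν y}) := by rw [hnull, add_zero]
      exact lt_of_lt_of_le hBpos h1
    have hpos2 := hMeasure_pos_of_lt_locLower ν hα0 (fun y hy => hy.2) hposA
    have h2 : hMeasure α (B ∩ {y | (α : EReal) < locLower ν y}) ≤ hMeasure α B :=
      hMeasure_mono inter_subset_left
    rw [hαm] at h2
    exact absurd (lt_of_lt_of_le hpos2 h2) (lt_irrefl _)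
  · rcases eq_or_ne (essInf (locLower ν) ν) ⊤ with htop | htop
    · rw [htop]; exact le_top
    · by_contra hlt
      push_neg at hlt
      obtain ⟨t, ht1, ht2⟩ := EReal.lt_iff_exists_real_btwn.1 hlt
      obtain ⟨t', ht'1, ht'2⟩ := EReal.lt_iff_exists_real_btwn.1 ht1
      have ht'0 : 0 < t' := by
        have h := (essInf_locLower_nonneg ν).trans_lt ht'1
        exact_mod_cast h
      have htt' : t' < t := by exact_mod_cast ht'2
      have ht0 : 0 ≤ t := (ht'0.trans htt').le
      have hne : ν {y | locLower ν y < (t' : EReal)} ≠ 0 := by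
        intro h0
        have hae : ∀ᵐ y ∂ν, (t' : EReal) ≤ locLower ν y := by
          rw [ae_iff]
          simpa only [not_le] using h0
        have := le_liminf_of_le (by isBoundedDefault) hae
        exact absurd (lt_of_le_of_lt this ht'1) (lt_irrefl _)
      have hN : ν {y : X | ¬ ∀ r : ℝ, 0 < r → ν (ball y r) ≠ 0} = 0 :=
        ae_iff.1 (ae_ball_pos ν)
      have hsub : {y | locLower ν y < (t' : EReal)} ⊆
          Eset ν t ∪ {y : X | ¬ ∀ r : ℝ, 0 < r → ν (ball y r) ≠ 0} := by
        intro y hy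
        by_cases hyg : ∀ r : ℝ, 0 < r → ν (ball y r) ≠ 0
        · exact Or.inl (mem_Eset_of_locLower_lt ν ht'0 htt' hyg hy)
        · exact Or.inr hyg
      have hpos : 0 < ν (Eset ν t) := by
        rw [pos_iff_ne_zero]
        intro h0
        have h1 : ν {y | locLower ν y < (t' : EReal)} = 0 := by
          refine le_antisymm ?_ zero_le
          calc ν {y | locLower ν y < (t' : EReal)}
              ≤ ν (Eset ν t ∪ {y : X | ¬ ∀ r : ℝ, 0 < r → ν (ball y r) ≠ 0}) :=
                measure_mono hsub
            _ ≤ ν (Eset ν t) +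
                ν {y : X | ¬ ∀ r : ℝ, 0 < r → ν (ball y r) ≠ 0} := measure_union_le _ _
            _ = 0 := by rw [h0, hN, add_zero]
        exact hne h1
      have hchain : (⨅ (B : Set X) (_ : MeasurableSet B) (_ : 0 < ν B), hDim B) ≤
          hDim (Eset ν t) :=
        iInf_le_of_le _ (iInf_le_of_le (measurableSet_Eset ν t) (iInf_le _ hpos))
      have hfin := hchain.trans (hDim_Eset_le ν ht0)
      exact absurd (lt_of_le_of_lt hfin ht2) (lt_irrefl _)

end PaperAux
end Chunk7




open Paper in
/-- For a separable metric space `X` and a Borel probability measure `ν` on `X`: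
the upper (resp. lower) packing dimension of `ν`, i.e. the essential supremum (resp. infimum) of
the upper local dimension, equals the infimum of the packing dimensions of Borel sets of full
(resp. positive) measure; and the upper (resp. lower) Hausdorff dimension of `ν`, i.e. the
essential supremum (resp. infimum) of the lower local dimension, equals the infimum of the
Hausdorff dimensions of Borel sets of full (resp. positive) measure. -/
theorem statement_5 {X : Type*} [MetricSpace X] [TopologicalSpace.SeparableSpace X]
    [MeasurableSpace X] [BorelSpace X] (ν : Measure X) [IsProbabilityMeasure ν] :
    (essSup (locUpper ν) ν = ⨅ (B : Set X) (_ : MeasurableSet B) (_ : ν B = 1), packDim B) ∧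
    (essInf (locUpper ν) ν = ⨅ (B : Set X) (_ : MeasurableSet B) (_ : 0 < ν B), packDim B) ∧
    (essSup (locLower ν) ν = ⨅ (B : Set X) (_ : MeasurableSet B) (_ : ν B = 1), hDim B) ∧
    (essInf (locLower ν) ν = ⨅ (B : Set X) (_ : MeasurableSet B) (_ : 0 < ν B), hDim B) := 
  ⟨PaperAux.essSup_locUpper_eq ν, PaperAux.essInf_locUpper_eq ν,
    PaperAux.essSup_locLower_eq ν, PaperAux.essInf_locLower_eq ν⟩
end
end

section
/- Let X be a proper, δ-hyperbolic metric space, Γ a discrete group of isometries of X, x ∈ X a basepoint, τ ≥ 0 and Θ = (θ_i) an increasing unbounded sequence of real numbers. Then (i) Λ_{τ,Θ}(Γ) is contained in the limit set Λ(Γ), and (ii) Λ_{τ,Θ}(Γ) is a closed subset of ∂X. -/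
open Filter Metric Set MeasureTheory Topology
open scoped ENNReal NNReal

noncomputable section

namespace Paper

variable {X : Type*} [MetricSpace X]

/-- The Gromov product `(y,z)_x`. -/
def gromov (x y z : X) : ℝ := (dist x y + dist x z - dist y z) / 2

/-- A metric space is geodesic if every two points are joined by an isometrically
parametrized segment. -/
def IsGeodesicSpace (X : Type*) [MetricSpace X] : Prop :=
  ∀ x y : X, ∃ γ : ℝ → X, γ 0 = x ∧ γ (dist x y) = y ∧
    ∀ s ∈ Set.Icc (0:ℝ) (dist x y), ∀ t ∈ Set.Icc (0:ℝ) (dist x y),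
      dist (γ s) (γ t) = |s - t|

/-- `δ`-hyperbolicity via the four points condition on Gromov products. -/
def IsHyperbolic (X : Type*) [MetricSpace X] (δ : ℝ) : Prop :=
  ∀ w x y z : X, min (gromov w x y) (gromov w y z) - δ ≤ gromov w x z

/-- A geodesic ray, i.e. an isometric embedding of `[0,∞)`. -/
def IsGeodesicRay (ξ : ℝ → X) : Prop :=
  ∀ s t : ℝ, 0 ≤ s → 0 ≤ t → dist (ξ s) (ξ t) = |s - t|

/-- Sequences converging to infinity: the mutual Gromov products diverge. -/
def IsGromovSeq (u : ℕ → X) : Prop :=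
  ∀ x : X, Tendsto (fun p : ℕ × ℕ => gromov x (u p.1) (u p.2)) atTop atTop

def GromovSeq (X : Type*) [MetricSpace X] := {u : ℕ → X // IsGromovSeq u}

/-- Two sequences converging to infinity define the same boundary point iff their mutual
Gromov products diverge. -/
def gromovRel (u v : GromovSeq X) : Prop :=
  ∀ x : X, Tendsto (fun p : ℕ × ℕ => gromov x (u.1 p.1) (v.1 p.2)) atTop atTop

/-- The Gromov boundary of `X`. -/
def GromovBoundary (X : Type*) [MetricSpace X] := Quot (gromovRel (X := X))

/-- The boundary point determined by a sequence converging to infinity. -/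
def GromovSeq.pt (u : GromovSeq X) : GromovBoundary X := Quot.mk _ u

/-- The geodesic ray `ξ` joins `ξ 0` to the boundary point `z`. -/
def RayTo (ξ : ℝ → X) (z : GromovBoundary X) : Prop :=
  ∃ h : IsGromovSeq (fun n : ℕ => ξ n), GromovSeq.pt ⟨fun n : ℕ => ξ n, h⟩ = z

/-- The Gromov product of two boundary points with respect to the basepoint `x`. -/
def bProd (x : X) (z w : GromovBoundary X) : EReal :=
  ⨆ (u : GromovSeq X) (v : GromovSeq X) (_ : u.pt = z) (_ : v.pt = w),
    Filter.liminf (fun p : ℕ × ℕ => ((gromov x (u.1 p.1) (v.1 p.2) : ℝ) : EReal)) atTop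

/-- The generalized visual ball of center `z` and radius `ρ` (with respect to
the basepoint `x`). -/
def visBall (x : X) (z : GromovBoundary X) (ρ : ℝ) : Set (GromovBoundary X) :=
  {w | (Real.log ρ⁻¹ : EReal) < bProd x z w}

/-- The natural topology of the Gromov boundary, generated by the generalized visual balls. -/
def bTop (X : Type*) [MetricSpace X] : TopologicalSpace (GromovBoundary X) :=
  TopologicalSpace.generateFrom
    {S | ∃ (x : X) (z : GromovBoundary X) (ρ : ℝ), 0 < ρ ∧ S = visBall x z ρ}

section Group

variable (G : Type*) [Group G] [MulAction G X]

/-- A group of isometries is discrete if orbits meet balls in finitely many points. -/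
def DiscreteAction (X : Type*) [MetricSpace X] [MulAction G X] : Prop :=
  ∀ (x : X) (R : ℝ), {g : G | dist x (g • x) ≤ R}.Finite

def FreeAction (X : Type*) [MetricSpace X] [MulAction G X] : Prop :=
  ∀ (g : G) (x : X), g • x = x → g = 1

/-- The limit set: accumulation points at infinity of an orbit. -/
def limitSet (x : X) : Set (GromovBoundary X) :=
  {z | ∃ (g : ℕ → G) (h : IsGromovSeq fun n => g n • x), GromovSeq.pt ⟨_, h⟩ = z}

/-- The set `Λ_{τ,Θ}(Γ)`. -/
def lambdaSet (x : X) (τ : ℝ) (θ : ℕ → ℝ) : Set (GromovBoundary X) :=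
  {z | ∃ ξ : ℝ → X, IsGeodesicRay ξ ∧ ξ 0 = x ∧ RayTo ξ z ∧
    ∀ i : ℕ, ∃ t : ℝ, 0 ≤ t ∧ θ i ≤ dist x (ξ t) ∧ dist x (ξ t) ≤ θ (i + 1) ∧
      Metric.infDist (ξ t) (MulAction.orbit G x) ≤ τ}

/-- The set `Λ_τ(Γ) = Λ_{τ, (iτ)}(Γ)`. -/
def lambdaTau (x : X) (τ : ℝ) : Set (GromovBoundary X) :=
  lambdaSet G x τ fun i => i * τ

/-- Increasing unbounded sequences of reals. -/
def IncrUnbounded (θ : ℕ → ℝ) : Prop := StrictMono θ ∧ Tendsto θ atTop atTop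

/-- The radial limit set. -/
def radialSet (x : X) : Set (GromovBoundary X) :=
  ⋃ (τ : ℝ) (_ : 0 ≤ τ) (θ : ℕ → ℝ) (_ : IncrUnbounded θ), lambdaSet G x τ θ

/-- The uniform radial limit set. -/
def uRadialSet (x : X) : Set (GromovBoundary X) :=
  ⋃ (τ : ℝ) (_ : 0 ≤ τ), lambdaTau G x τ

/-- The ergodic limit set. -/
def ergodicLimitSet (x : X) : Set (GromovBoundary X) :=
  ⋃ (τ : ℝ) (_ : 0 ≤ τ) (θ : ℕ → ℝ)
    (_ : IncrUnbounded θ ∧ ∃ L : ℝ, Tendsto (fun i : ℕ => θ i / i) atTop (nhds L)),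
    lambdaSet G x τ θ

/-- The number of orbit points in the open ball `B(x,T)`. -/
def orbitCount (x : X) (T : ℝ) : ℕ :=
  Nat.card {y : X // y ∈ MulAction.orbit G x ∧ dist x y < T}

/-- The critical exponent `h_Γ = limsup (1/T) log #(Γx ∩ B(x,T))`. -/
def critExp (x : X) : EReal :=
  limsup (fun T : ℝ => ((Real.log (orbitCount G x T) / T : ℝ) : EReal)) atTop

/-- The lower critical exponent, defined with a limit inferior. -/
def critExpLower (x : X) : EReal :=
  liminf (fun T : ℝ => ((Real.log (orbitCount G x T) / T : ℝ) : EReal)) atTop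

/-- The graph of the action of an isometry on the Gromov boundary. -/
def BSmul (g : G) (z w : GromovBoundary X) : Prop :=
  ∃ u v : GromovSeq X, u.pt = z ∧ v.pt = w ∧ ∀ n, v.1 n = g • u.1 n

end Group

section Dimensions

/-- Hausdorff `α`-content at scale `η`, using countable coverings by generalized visual balls. -/
def visHContent (x : X) (α η : ℝ) (B : Set (GromovBoundary X)) : ℝ≥0∞ :=
  ⨅ (z : ℕ → GromovBoundary X) (ρ : ℕ → ℝ)
    (_ : ∀ i, 0 < ρ i ∧ ρ i ≤ η) (_ : B ⊆ ⋃ i, visBall x (z i) (ρ i)),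
    ∑' i, ENNReal.ofReal (ρ i ^ α)

/-- The visual Hausdorff `α`-measure. -/
def visHMeasure (x : X) (α : ℝ) (B : Set (GromovBoundary X)) : ℝ≥0∞ :=
  ⨆ (η : ℝ) (_ : 0 < η), visHContent x α η B

/-- The visual Hausdorff dimension: the critical exponent of `α ↦ visHMeasure x α B`. -/
def visHD (x : X) (B : Set (GromovBoundary X)) : EReal :=
  sInf {a : EReal | ∃ α : ℝ, a = (α : EReal) ∧ 0 ≤ α ∧ visHMeasure x α B = 0}

/-- The visual packing `α`-pre-measure, built from countable families of disjoint
generalized visual balls centered in `B`. -/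
def visPackPre (x : X) (α : ℝ) (B : Set (GromovBoundary X)) : ℝ≥0∞ :=
  ⨅ (η : ℝ) (_ : 0 < η),
    ⨆ (I : Set ℕ) (z : ℕ → GromovBoundary X) (ρ : ℕ → ℝ)
      (_ : ∀ i ∈ I, z i ∈ B ∧ 0 < ρ i ∧ ρ i ≤ η)
      (_ : I.PairwiseDisjoint fun i => visBall x (z i) (ρ i)),
      ∑' i : I, ENNReal.ofReal (ρ (i : ℕ) ^ α)

/-- The visual packing `α`-measure, obtained from the pre-measure by countable coverings. -/
def visPackMeasure (x : X) (α : ℝ) (B : Set (GromovBoundary X)) : ℝ≥0∞ :=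
  ⨅ (C : ℕ → Set (GromovBoundary X)) (_ : B ⊆ ⋃ k, C k), ∑' k, visPackPre x α (C k)

/-- The visual packing dimension: the critical exponent of `α ↦ visPackMeasure x α B`. -/
def visPD (x : X) (B : Set (GromovBoundary X)) : EReal :=
  sInf {a : EReal | ∃ α : ℝ, a = (α : EReal) ∧ 0 ≤ α ∧ visPackMeasure x α B = 0}

/-- Minimal number of generalized visual balls of radius `ρ` needed to cover `B`. -/
def visCov (x : X) (B : Set (GromovBoundary X)) (ρ : ℝ) : ℕ :=
  sInf {n : ℕ | ∃ z : Fin n → GromovBoundary X, B ⊆ ⋃ i, visBall x (z i) ρ}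

/-- The visual upper Minkowski dimension. -/
def visMDsup (x : X) (B : Set (GromovBoundary X)) : EReal :=
  limsup (fun ρ : ℝ => ((Real.log (visCov x B ρ) / Real.log ρ⁻¹ : ℝ) : EReal))
    (nhdsWithin 0 (Set.Ioi 0))

/-- The visual lower Minkowski dimension. -/
def visMDinf (x : X) (B : Set (GromovBoundary X)) : EReal :=
  liminf (fun ρ : ℝ => ((Real.log (visCov x B ρ) / Real.log ρ⁻¹ : ℝ) : EReal))
    (nhdsWithin 0 (Set.Ioi 0))

end Dimensions

end Paper


namespace Paper
section Aux
variable {X : Type*} [MetricSpace X]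

theorem grom_comm (x a b : X) : gromov x a b = gromov x b a := by
  unfold gromov; rw [dist_comm a b]; ring

theorem grom_base (x y a b : X) : gromov x a b - dist x y ≤ gromov y a b := by
  have h1 := dist_triangle x y a
  have h2 := dist_triangle x y b
  unfold gromov; linarith

theorem grom_move (x a b a' b' : X) :
    gromov x a b - dist a a' - dist b b' ≤ gromov x a' b' := by
  have h1 := dist_triangle x a' a
  have h2 := dist_triangle x b' b
  have h3 := dist_triangle a' a b'
  have h4 := dist_triangle a b b'
  have h5 := dist_comm a' a
  have h6 := dist_comm b' b
  unfold gromov; linarith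

theorem grom_ge (x a b : X) : dist x b - dist a b ≤ gromov x a b := by
  have := dist_triangle x a b
  unfold gromov; linarith

theorem ray_dist {ξ : ℝ → X} (h : IsGeodesicRay ξ) {t : ℝ} (ht : 0 ≤ t) :
    dist (ξ 0) (ξ t) = t := by
  rw [h 0 t le_rfl ht, zero_sub, abs_neg, abs_of_nonneg ht]

theorem ray_gromov {ξ : ℝ → X} (h : IsGeodesicRay ξ) {s t : ℝ} (hs : 0 ≤ s) (ht : 0 ≤ t) :
    gromov (ξ 0) (ξ s) (ξ t) = min s t := by
  unfold gromov
  rw [ray_dist h hs, ray_dist h ht, h s t hs ht]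
  rcases le_total s t with hst | hst
  · rw [abs_of_nonpos (by linarith), min_eq_left hst]; ring
  · rw [abs_of_nonneg (by linarith), min_eq_right hst]; ring

theorem tendsto_min2 {f g : ℕ → ℝ} (hf : Tendsto f atTop atTop) (hg : Tendsto g atTop atTop) :
    Tendsto (fun p : ℕ × ℕ => min (f p.1) (g p.2)) atTop atTop := by
  rw [Filter.tendsto_atTop]
  intro b
  obtain ⟨Nf, hNf⟩ := eventually_atTop.1 (hf.eventually_ge_atTop b)
  obtain ⟨Ng, hNg⟩ := eventually_atTop.1 (hg.eventually_ge_atTop b)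
  rw [eventually_atTop]
  exact ⟨(Nf, Ng), fun p hp => le_min (hNf _ hp.1) (hNg _ hp.2)⟩

theorem ray_seq {ξ : ℝ → X} (h : IsGeodesicRay ξ) : IsGromovSeq (fun n : ℕ => ξ n) := by
  intro y
  have hb : ∀ p : ℕ × ℕ, min (p.1 : ℝ) (p.2 : ℝ) - dist (ξ 0) y ≤ gromov y (ξ p.1) (ξ p.2) := by
    intro p
    have := grom_base (ξ 0) y (ξ p.1) (ξ p.2)
    rw [ray_gromov h (Nat.cast_nonneg _) (Nat.cast_nonneg _)] at this
    exact this
  have ht : Tendsto (fun p : ℕ × ℕ => min (p.1 : ℝ) (p.2 : ℝ) - dist (ξ 0) y) atTop atTop := by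
    simpa [sub_eq_add_neg] using
      tendsto_atTop_add_const_right atTop (-(dist (ξ 0) y))
        (tendsto_min2 tendsto_natCast_atTop_atTop tendsto_natCast_atTop_atTop)
  exact tendsto_atTop_mono hb ht

theorem rel_symm {u v : GromovSeq X} (h : gromovRel u v) : gromovRel v u := by
  intro y
  have hswap : Tendsto (Prod.swap : ℕ × ℕ → ℕ × ℕ) atTop atTop := by
    rw [← prod_atTop_atTop_eq]
    exact tendsto_snd.prodMk tendsto_fst
  have := (h y).comp hswap
  convert this using 1
  funext p
  simp [Function.comp, grom_comm]

theorem rel_trans {δ : ℝ} (hhyp : IsHyperbolic X δ) {u v w : GromovSeq X}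
    (h1 : gromovRel u v) (h2 : gromovRel v w) : gromovRel u w := by
  intro y
  rw [Filter.tendsto_atTop]
  intro M
  obtain ⟨⟨N1, N1'⟩, hN1⟩ := eventually_atTop.1 ((h1 y).eventually_ge_atTop (M + δ))
  obtain ⟨⟨N2, N2'⟩, hN2⟩ := eventually_atTop.1 ((h2 y).eventually_ge_atTop (M + δ))
  set k := max N1' N2 with hk
  rw [eventually_atTop]
  refine ⟨(N1, N2'), fun p hp => ?_⟩
  have A := hN1 (p.1, k) ⟨hp.1, le_max_left _ _⟩
  have B := hN2 (k, p.2) ⟨le_max_right _ _, hp.2⟩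
  have h := hhyp y (u.1 p.1) (v.1 k) (w.1 p.2)
  have := le_min A B
  linarith

theorem rel_of_pt_eq {δ : ℝ} (hhyp : IsHyperbolic X δ) {u v : GromovSeq X}
    (h : GromovSeq.pt u = GromovSeq.pt v) : gromovRel u v := by
  have h' : Relation.EqvGen (gromovRel (X := X)) u v := Quot.eq.1 h
  clear h
  induction h' with
  | rel a b hab => exact hab
  | refl a => exact a.2
  | symm a b _ ih => exact rel_symm ih
  | trans a b c _ _ ih1 ih2 => exact rel_trans hhyp ih1 ih2


theorem bProd_self_lt {X : Type*} [MetricSpace X] (x : X) (w : GromovBoundary X) (c : ℝ) :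
    (c : EReal) < bProd x w w := by
  obtain ⟨u₀, hu₀⟩ := Quot.exists_rep w
  have hpt : GromovSeq.pt u₀ = w := hu₀
  set F : GromovSeq X → GromovSeq X → EReal := fun u v =>
    liminf (fun p : ℕ × ℕ => ((gromov x (u.1 p.1) (v.1 p.2) : ℝ) : EReal)) atTop with hF
  have h1 : ((c + 1 : ℝ) : EReal) ≤ F u₀ u₀ := by
    apply le_liminf_of_le (by isBoundedDefault)
    have := (u₀.2 x).eventually_ge_atTop (c + 1)
    exact this.mono fun p hp => EReal.coe_le_coe_iff.2 hp
  have h2 : F u₀ u₀ ≤ bProd x w w := by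
    have e1 : F u₀ u₀ = ⨆ (_ : GromovSeq.pt u₀ = w) (_ : GromovSeq.pt u₀ = w), F u₀ u₀ := by
      rw [iSup_pos hpt, iSup_pos hpt]
    calc F u₀ u₀ = ⨆ (_ : GromovSeq.pt u₀ = w) (_ : GromovSeq.pt u₀ = w), F u₀ u₀ := e1
      _ ≤ ⨆ v, ⨆ (_ : GromovSeq.pt u₀ = w) (_ : GromovSeq.pt v = w), F u₀ v :=
          le_iSup (fun v => ⨆ (_ : GromovSeq.pt u₀ = w) (_ : GromovSeq.pt v = w), F u₀ v) u₀
      _ ≤ bProd x w w :=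
          le_iSup (fun u => ⨆ v, ⨆ (_ : GromovSeq.pt u = w) (_ : GromovSeq.pt v = w), F u v) u₀
  refine lt_of_lt_of_le ?_ (h1.trans h2)
  exact_mod_cast lt_add_one c

theorem mem_of_cluster {X : Type*} [MetricSpace X] [ProperSpace X]
    {δ : ℝ} (hδ : 0 ≤ δ) (hhyp : IsHyperbolic X δ)
    {G : Type*} [Group G] [MulAction G X] {x : X} {τ : ℝ} {θ : ℕ → ℝ}
    {w : GromovBoundary X}
    (h : ∀ n : ℕ, ∃ z ∈ lambdaSet G x τ θ, ((n : ℝ) : EReal) < bProd x w z) :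
    w ∈ lambdaSet G x τ θ := by
  classical
  choose z hzΛ hbp using h
  simp only [lambdaSet, Set.mem_setOf_eq] at hzΛ
  choose ξs hray hx0 hRT hpts using hzΛ
  choose t ht0 hθl hθr hinf using hpts
  choose hGSn hptn using hRT
  simp only [bProd, lt_iSup_iff] at hbp
  choose u v hu hv hlim using hbp
  have hJex : ∀ n : ℕ, ∃ J : ℕ, ∀ i ≥ J, ∀ j ≥ J,
      (n : ℝ) ≤ gromov x ((u n).1 i) ((v n).1 j) := by
    intro n
    have h1 := eventually_lt_of_lt_liminf (hlim n)
    rw [eventually_atTop] at h1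
    obtain ⟨⟨a, b⟩, hab⟩ := h1
    refine ⟨max a b, fun i hi j hj => ?_⟩
    have := hab (i, j) ⟨le_trans (le_max_left a b) hi, le_trans (le_max_right a b) hj⟩
    exact_mod_cast this.le
  choose J hJ using hJex
  have hdx : ∀ (n : ℕ) (s : ℝ), 0 ≤ s → dist x (ξs n s) = s := fun n s hs => by
    rw [← hx0 n]; exact ray_dist (hray n) hs
  -- ultrafilter limit construction
  let 𝒰 : Ultrafilter ℕ := Ultrafilter.of atTop
  have h𝒰 : (𝒰 : Filter ℕ) ≤ atTop := Ultrafilter.of_le _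
  have hex : ∀ s : ℝ, ∃ ylim : X, 0 ≤ s → Tendsto (fun n => ξs n s) 𝒰 (nhds ylim) := by
    intro s
    by_cases hs : 0 ≤ s
    · have hle : (𝒰.map fun n => ξs n s : Filter X) ≤ 𝓟 (closedBall x s) := by
        rw [Ultrafilter.coe_map]
        refine le_principal_iff.2 (eventually_map.2 (Eventually.of_forall fun n => ?_))
        show dist (ξs n s) x ≤ s
        rw [dist_comm, hdx n s hs]
      obtain ⟨y, _, hy⟩ := (isCompact_closedBall x s).ultrafilter_le_nhds _ hle
      exact ⟨y, fun _ => hy⟩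
    · exact ⟨x, fun h' => absurd h' hs⟩
  choose ξ hξ using hex
  have hraylim : IsGeodesicRay ξ := by
    intro s t' hs ht'
    have h1 : Tendsto (fun n => dist (ξs n s) (ξs n t')) 𝒰 (nhds (dist (ξ s) (ξ t'))) :=
      (hξ s hs).dist (hξ t' ht')
    have h2 : (fun n => dist (ξs n s) (ξs n t')) = fun _ => |s - t'| :=
      funext fun n => hray n s t' hs ht'
    rw [h2] at h1
    exact tendsto_nhds_unique h1 tendsto_const_nhds
  have hx0lim : ξ 0 = x := by
    have h1 := hξ 0 le_rfl
    have h2 : (fun n => ξs n 0) = fun _ => x := funext fun n => hx0 n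
    rw [h2] at h1
    exact tendsto_nhds_unique h1 tendsto_const_nhds
  -- limit times
  have hts : ∀ i : ℕ, ∃ si : ℝ, si ∈ Set.Icc (max (θ i) 0) (θ (i + 1)) ∧
      Tendsto (fun n => t n i) 𝒰 (nhds si) := by
    intro i
    have hmem : ∀ n, t n i ∈ Set.Icc (max (θ i) 0) (θ (i + 1)) := by
      intro n
      have h1 := hθl n i; have h2 := hθr n i
      rw [hdx n _ (ht0 n i)] at h1 h2
      exact ⟨max_le h1 (ht0 n i), h2⟩
    have hle : (𝒰.map fun n => t n i : Filter ℝ) ≤ 𝓟 (Set.Icc (max (θ i) 0) (θ (i + 1))) := by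
      rw [Ultrafilter.coe_map]
      exact le_principal_iff.2 (eventually_map.2 (Eventually.of_forall hmem))
    obtain ⟨si, hsi, hsi2⟩ := isCompact_Icc.ultrafilter_le_nhds _ hle
    exact ⟨si, hsi, hsi2⟩
  choose sℓ hsmem hst using hts
  have hs0 : ∀ i, 0 ≤ sℓ i := fun i => le_trans (le_max_right _ _) (hsmem i).1
  have hconv : ∀ i, Tendsto (fun n => ξs n (t n i)) 𝒰 (nhds (ξ (sℓ i))) := by
    intro i
    rw [tendsto_iff_dist_tendsto_zero]
    have hb : ∀ n, dist (ξs n (t n i)) (ξ (sℓ i)) ≤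
        |t n i - sℓ i| + dist (ξs n (sℓ i)) (ξ (sℓ i)) := by
      intro n
      have h1 := dist_triangle (ξs n (t n i)) (ξs n (sℓ i)) (ξ (sℓ i))
      have h2 : dist (ξs n (t n i)) (ξs n (sℓ i)) = |t n i - sℓ i| :=
        hray n _ _ (ht0 n i) (hs0 i)
      linarith
    have hlim0 : Tendsto (fun n => |t n i - sℓ i| + dist (ξs n (sℓ i)) (ξ (sℓ i))) 𝒰
        (nhds 0) := by
      have ha : Tendsto (fun n => |t n i - sℓ i|) 𝒰 (nhds 0) := by
        have := ((hst i).sub (tendsto_const_nhds (x := sℓ i))).abs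
        simpa using this
      have hb2 : Tendsto (fun n => dist (ξs n (sℓ i)) (ξ (sℓ i))) 𝒰 (nhds 0) :=
        tendsto_iff_dist_tendsto_zero.1 (hξ (sℓ i) (hs0 i))
      simpa using ha.add hb2
    exact squeeze_zero (fun n => dist_nonneg) hb hlim0
  have hinflim : ∀ i, Metric.infDist (ξ (sℓ i)) (MulAction.orbit G x) ≤ τ := by
    intro i
    have hcont : Tendsto (fun n => Metric.infDist (ξs n (t n i)) (MulAction.orbit G x)) 𝒰
        (nhds (Metric.infDist (ξ (sℓ i)) (MulAction.orbit G x))) :=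
      ((continuous_infDist_pt _).tendsto _).comp (hconv i)
    exact le_of_tendsto hcont (Eventually.of_forall fun n => hinf n i)
  -- the boundary point of the limit ray
  obtain ⟨u₀, hu₀⟩ := Quot.exists_rep w
  have hu₀' : GromovSeq.pt u₀ = w := hu₀
  have hrelu : ∀ n, gromovRel (u n) u₀ := fun n =>
    rel_of_pt_eq hhyp ((hu n).trans hu₀'.symm)
  have hrelv : ∀ n, gromovRel ⟨fun k : ℕ => ξs n k, hGSn n⟩ (v n) := fun n =>
    rel_of_pt_eq hhyp ((hptn n).trans (hv n).symm)
  have hGS : IsGromovSeq (fun k : ℕ => ξ k) := ray_seq hraylim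
  have hrel : gromovRel ⟨fun k : ℕ => ξ k, hGS⟩ u₀ := by
    intro y
    rw [Filter.tendsto_atTop]
    intro M
    set d := dist x y with hd
    have hd0 : 0 ≤ d := dist_nonneg
    set C := M + δ with hC
    obtain ⟨K, hK⟩ := exists_nat_ge (C + 4 * δ + d + 1)
    have inner : ∃ N : ℕ, ∀ m ≥ N, C ≤ gromov y (ξ K) (u₀.1 m) := by
      have e1 : ∀ᶠ n in (𝒰 : Filter ℕ), dist (ξs n K) (ξ K) < 1 :=
        (Metric.tendsto_nhds.1 (hξ (K : ℝ) (Nat.cast_nonneg _))) 1 one_pos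
      obtain ⟨n0, hn0⟩ := exists_nat_ge (C + 4 * δ + d)
      have e2 : ∀ᶠ n in (𝒰 : Filter ℕ), n0 ≤ n := h𝒰 (eventually_ge_atTop n0)
      obtain ⟨n, hn1, hn2⟩ := (e1.and e2).exists
      have hnR : C + 4 * δ + d ≤ (n : ℝ) := le_trans hn0 (Nat.cast_le.2 hn2)
      obtain ⟨⟨P1, P2⟩, hP⟩ := eventually_atTop.1 ((hrelv n y).eventually_ge_atTop (C + 4 * δ))
      obtain ⟨⟨Q1, Q2⟩, hQ⟩ := eventually_atTop.1 ((hrelu n y).eventually_ge_atTop (C + 4 * δ))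
      refine ⟨Q2, fun m hm => ?_⟩
      set L : ℕ := max K P1 with hL
      set j : ℕ := max P2 (J n) with hj
      set i : ℕ := max (J n) Q1 with hi
      have hT1 : C + 4 * δ ≤ gromov y (ξ K) (ξs n K) := by
        have h1 := grom_ge y (ξ K) (ξs n K)
        have h3 := dist_triangle x y (ξs n (K : ℝ))
        have h4 : dist x (ξs n (K : ℝ)) = (K : ℝ) := hdx n _ (Nat.cast_nonneg _)
        have h5 : dist (ξ (K : ℝ)) (ξs n (K : ℝ)) ≤ 1 := by
          rw [dist_comm]; exact hn1.le
        rw [h4] at h3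
        linarith
      have hT2 : C + 4 * δ ≤ gromov y (ξs n K) (ξs n L) := by
        have h1 := grom_base x y (ξs n (K : ℝ)) (ξs n (L : ℝ))
        have h2 : gromov x (ξs n (K : ℝ)) (ξs n (L : ℝ)) = min (K : ℝ) (L : ℝ) := by
          rw [← hx0 n]; exact ray_gromov (hray n) (Nat.cast_nonneg _) (Nat.cast_nonneg _)
        have h3 : min (K : ℝ) (L : ℝ) = (K : ℝ) :=
          min_eq_left (Nat.cast_le.2 (le_max_left K P1))
        rw [h3] at h2
        linarith
      have hT3 : C + 4 * δ ≤ gromov y (ξs n L) ((v n).1 j) :=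
        hP (L, j) ⟨le_max_right K P1, le_max_left P2 (J n)⟩
      have hT4 : C + 4 * δ ≤ gromov y ((v n).1 j) ((u n).1 i) := by
        have h1 := hJ n i (le_max_left _ _) j (le_max_right P2 (J n))
        have h2 := grom_base x y ((u n).1 i) ((v n).1 j)
        rw [grom_comm]
        linarith
      have hT5 : C + 4 * δ ≤ gromov y ((u n).1 i) (u₀.1 m) :=
        hQ (i, m) ⟨le_max_right (J n) Q1, hm⟩
      have c4 : C + 3 * δ ≤ gromov y ((v n).1 j) (u₀.1 m) := by
        have hh := hhyp y ((v n).1 j) ((u n).1 i) (u₀.1 m)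
        have hmin := le_min hT4 hT5
        linarith
      have c3 : C + 2 * δ ≤ gromov y (ξs n L) (u₀.1 m) := by
        have hh := hhyp y (ξs n (L : ℝ)) ((v n).1 j) (u₀.1 m)
        have hmin := le_min (le_trans (by linarith) hT3) c4
        linarith
      have c2 : C + 1 * δ ≤ gromov y (ξs n K) (u₀.1 m) := by
        have hh := hhyp y (ξs n (K : ℝ)) (ξs n (L : ℝ)) (u₀.1 m)
        have hmin := le_min (le_trans (by linarith) hT2) c3
        linarith
      have hh := hhyp y (ξ (K : ℝ)) (ξs n (K : ℝ)) (u₀.1 m)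
      have hmin := le_min (le_trans (by linarith) hT1) c2
      linarith
    obtain ⟨N, hN⟩ := inner
    rw [eventually_atTop]
    refine ⟨(K, N), fun p hp => ?_⟩
    have hA : (K : ℝ) - d ≤ gromov y (ξ p.1) (ξ K) := by
      have h1 := grom_base x y (ξ (p.1 : ℝ)) (ξ (K : ℝ))
      have h2 : gromov x (ξ (p.1 : ℝ)) (ξ (K : ℝ)) = min (p.1 : ℝ) (K : ℝ) := by
        rw [← hx0lim]; exact ray_gromov hraylim (Nat.cast_nonneg _) (Nat.cast_nonneg _)
      have h3 : min (p.1 : ℝ) (K : ℝ) = (K : ℝ) := min_eq_right (Nat.cast_le.2 hp.1)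
      rw [h3] at h2
      linarith
    have hh := hhyp y (ξ (p.1 : ℝ)) (ξ (K : ℝ)) (u₀.1 p.2)
    have hmin := le_min (le_trans (by linarith) hA) (hN p.2 hp.2)
    dsimp only
    linarith
  refine ⟨ξ, hraylim, hx0lim, ⟨hGS, (Quot.sound hrel).trans hu₀'⟩, fun i => ?_⟩
  refine ⟨sℓ i, hs0 i, ?_, ?_, hinflim i⟩
  · have hdist : dist x (ξ (sℓ i)) = sℓ i := by
      rw [← hx0lim]; exact ray_dist hraylim (hs0 i)
    rw [hdist]
    exact le_trans (le_max_left _ _) (hsmem i).1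
  · have hdist : dist x (ξ (sℓ i)) = sℓ i := by
      rw [← hx0lim]; exact ray_dist hraylim (hs0 i)
    rw [hdist]
    exact (hsmem i).2

end Aux
end Paper

open Paper in
/-- For a proper δ-hyperbolic (geodesic) metric space `X`, a discrete group
`Γ = G` of isometries, a basepoint `x`, `τ ≥ 0` and an increasing unbounded sequence `θ`:
(i) `Λ_{τ,Θ}(Γ)` is contained in the limit set `Λ(Γ)`, and (ii) `Λ_{τ,Θ}(Γ)` is closed in the
Gromov boundary. -/
theorem statement_6 {X : Type*} [MetricSpace X] [ProperSpace X]
    (hgeo : IsGeodesicSpace X) (δ : ℝ) (hδ : 0 ≤ δ) (hhyp : IsHyperbolic X δ)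
    (G : Type*) [Group G] [MulAction G X] [IsIsometricSMul G X]
    (hdisc : DiscreteAction G X) (x : X)
    (τ : ℝ) (hτ : 0 ≤ τ) (θ : ℕ → ℝ) (hθ : IncrUnbounded θ) :
    lambdaSet G x τ θ ⊆ limitSet G x ∧ IsClosed[bTop X] (lambdaSet G x τ θ) := by
  constructor
  · -- part (i)
    rintro z ⟨ξ, hray, hx0, ⟨hseq, hpt⟩, hpts⟩
    choose t ht0 hθl hθr hinf using hpts
    -- distance from x along the ray
    have hdx : ∀ s : ℝ, 0 ≤ s → dist x (ξ s) = s := by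
      intro s hs; rw [← hx0]; exact ray_dist hray hs
    have htθ : ∀ i, θ i ≤ t i := by
      intro i; have := hθl i; rwa [hdx _ (ht0 i)] at this
    -- choose orbit points
    have horb : (MulAction.orbit G x).Nonempty := ⟨x, MulAction.mem_orbit_self x⟩
    have hg : ∀ i, ∃ g : G, dist (ξ (t i)) (g • x) < τ + 1 := by
      intro i
      have h1 : Metric.infDist (ξ (t i)) (MulAction.orbit G x) < τ + 1 :=
        lt_of_le_of_lt (hinf i) (by linarith)
      obtain ⟨y, hy, hlt⟩ := (Metric.infDist_lt_iff horb).1 h1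
      obtain ⟨g, hgy⟩ := MulAction.mem_orbit_iff.1 hy
      exact ⟨g, by rwa [hgy]⟩
    choose g hgd using hg
    -- key lower bound
    have hlow : ∀ (y : X) (i j : ℕ),
        min (θ i) (θ j) - dist x y - 2 * (τ + 1) ≤ gromov y (g i • x) (g j • x) := by
      intro y i j
      have h1 := grom_move y (ξ (t i)) (ξ (t j)) (g i • x) (g j • x)
      have h2 := grom_base x y (ξ (t i)) (ξ (t j))
      have h3 : gromov x (ξ (t i)) (ξ (t j)) = min (t i) (t j) := by
        rw [← hx0]; exact ray_gromov hray (ht0 i) (ht0 j)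
      have h4 : min (θ i) (θ j) ≤ min (t i) (t j) := min_le_min (htθ i) (htθ j)
      have h5 := (hgd i).le
      have h6 := (hgd j).le
      linarith
    have hθmin : ∀ c : ℝ, Tendsto (fun p : ℕ × ℕ => min (θ p.1) (θ p.2) - c) atTop atTop := by
      intro c
      simpa [sub_eq_add_neg] using
        tendsto_atTop_add_const_right atTop (-c) (tendsto_min2 hθ.2 hθ.2)
    have hGS : IsGromovSeq (fun n => g n • x) := by
      intro y
      refine tendsto_atTop_mono (f := fun p : ℕ × ℕ =>
        min (θ p.1) (θ p.2) - (dist x y + 2 * (τ + 1))) (fun p => ?_) (hθmin _)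
      dsimp only
      have := hlow y p.1 p.2; linarith
    refine ⟨g, hGS, ?_⟩
    have hrel : gromovRel ⟨fun n => g n • x, hGS⟩ ⟨fun n : ℕ => ξ n, hseq⟩ := by
      intro y
      have hb : ∀ p : ℕ × ℕ,
          min (θ p.1) (p.2 : ℝ) - dist x y - (τ + 1) ≤ gromov y (g p.1 • x) (ξ p.2) := by
        intro p
        have h1 := grom_move y (ξ (t p.1)) (ξ p.2) (g p.1 • x) (ξ p.2)
        have h2 := grom_base x y (ξ (t p.1)) (ξ p.2)
        have h3 : gromov x (ξ (t p.1)) (ξ p.2) = min (t p.1) (p.2 : ℝ) := by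
          rw [← hx0]; exact ray_gromov hray (ht0 p.1) (Nat.cast_nonneg _)
        have h4 : min (θ p.1) (p.2 : ℝ) ≤ min (t p.1) (p.2 : ℝ) :=
          min_le_min (htθ p.1) le_rfl
        have h5 := (hgd p.1).le
        simp only [dist_self] at h1
        linarith
      have ht2 : Tendsto (fun p : ℕ × ℕ =>
          min (θ p.1) (p.2 : ℝ) - (dist x y + (τ + 1))) atTop atTop := by
        simpa [sub_eq_add_neg] using
          tendsto_atTop_add_const_right atTop (-(dist x y + (τ + 1)))
            (tendsto_min2 hθ.2 tendsto_natCast_atTop_atTop)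
      refine tendsto_atTop_mono (fun p => ?_) ht2
      dsimp only
      have := hb p; linarith
    exact (Quot.sound hrel).trans hpt
  · -- part (ii)
    have hw : ∀ w, w ∉ lambdaSet G x τ θ →
        ∃ ρ : ℝ, 0 < ρ ∧ ∀ z ∈ visBall x w ρ, z ∉ lambdaSet G x τ θ := by
      intro w hwn
      by_contra hcon
      push_neg at hcon
      apply hwn
      apply mem_of_cluster hδ hhyp
      intro n
      obtain ⟨z, hz1, hz2⟩ := hcon (Real.exp (-(n : ℝ))) (Real.exp_pos _)
      refine ⟨z, hz2, ?_⟩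
      have hlog : Real.log (Real.exp (-(n : ℝ)))⁻¹ = (n : ℝ) := by
        rw [Real.log_inv, Real.log_exp]; ring
      have hz1' : ((Real.log (Real.exp (-(n : ℝ)))⁻¹ : ℝ) : EReal) < bProd x w z := hz1
      rwa [hlog] at hz1'
    have hself : ∀ (w : GromovBoundary X) (ρ : ℝ), 0 < ρ → w ∈ visBall x w ρ :=
      fun w ρ _ => bProd_self_lt x w _
    choose ρ hρpos hρsub using hw
    have hcov : (lambdaSet G x τ θ)ᶜ =
        ⋃ w : ((lambdaSet G x τ θ)ᶜ : Set (GromovBoundary X)), visBall x w.1 (ρ w.1 w.2) := by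
      ext y1
      simp only [Set.mem_iUnion, Set.mem_compl_iff]
      constructor
      · intro hy
        exact ⟨⟨y1, hy⟩, hself y1 _ (hρpos y1 hy)⟩
      · rintro ⟨⟨w2, hw2⟩, hy⟩
        exact hρsub w2 hw2 y1 hy
    letI : TopologicalSpace (GromovBoundary X) := bTop X
    refine ⟨?_⟩
    rw [hcov]
    apply isOpen_iUnion
    intro w2
    exact TopologicalSpace.isOpen_generateFrom_of_mem
      ⟨x, w2.1, ρ w2.1 w2.2, hρpos w2.1 w2.2, rfl⟩
end
end

section
/- Let Γ be a group of isometries of a proper metric space X acting discretely and freely. Then the induced action of Γ on Loc-Geod(X), given by (gγ)(t) = g(γ(t)), is properly discontinuous: every γ ∈ Loc-Geod(X) has an open neighborhood U such that {g ∈ Γ : gU ∩ U ≠ ∅} = {id}. -/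
open Filter Metric Set MeasureTheory Topology
open scoped ENNReal NNReal

noncomputable section

namespace Paper

variable {X : Type*} [MetricSpace X]

/-- `X` is `P₀`-packed at scale `r₀`: every closed ball of radius `3r₀` contains at most `P₀`
points that are pairwise `2r₀`-separated. -/
def IsPacked (X : Type*) [MetricSpace X] (P₀ : ℕ) (r₀ : ℝ) : Prop :=
  ∀ (x : X) (s : Finset X), (↑s : Set X) ⊆ Metric.closedBall x (3 * r₀) →
    (∀ y ∈ s, ∀ z ∈ s, y ≠ z → 2 * r₀ < dist y z) → s.card ≤ P₀

/-- A `σ`-geodesic line: an isometric line all whose subsegments are `σ`-geodesics. -/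
structure IsSigmaGeodLine (σ : X → X → ℝ → X) (γ : ℝ → X) : Prop where
  isom : Isometry γ
  seg : ∀ s t : ℝ, s ≤ t → ∀ l ∈ Set.Icc (0:ℝ) 1, σ (γ s) (γ t) l = γ (s + l * (t - s))

/-- `(X,σ)` is a GCB-space: `σ` is a convex, consistent, reversible, geodesically complete
geodesic bicombing on the (complete) metric space `X`. -/
structure IsGCB (σ : X → X → ℝ → X) : Prop where
  source : ∀ x y : X, σ x y 0 = x
  target : ∀ x y : X, σ x y 1 = y
  propor : ∀ x y : X, ∀ s ∈ Set.Icc (0:ℝ) 1, ∀ t ∈ Set.Icc (0:ℝ) 1,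
    dist (σ x y s) (σ x y t) = |s - t| * dist x y
  convex : ∀ x y x' y' : X, ConvexOn ℝ (Set.Icc (0:ℝ) 1) fun t => dist (σ x y t) (σ x' y' t)
  consistent : ∀ x y : X, ∀ s t : ℝ, 0 ≤ s → s ≤ t → t ≤ 1 → ∀ l ∈ Set.Icc (0:ℝ) 1,
    σ (σ x y s) (σ x y t) l = σ x y ((1 - l) * s + l * t)
  reversible : ∀ x y : X, ∀ t ∈ Set.Icc (0:ℝ) 1, σ x y t = σ y x (1 - t)
  geodComplete : ∀ x y : X, ∃ γ : ℝ → X, IsSigmaGeodLine σ γ ∧ ∃ a b : ℝ, a ≤ b ∧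
    b - a = dist x y ∧ ∀ l ∈ Set.Icc (0:ℝ) 1, γ (a + l * (b - a)) = σ x y l

section Group

variable (G : Type*) [Group G] [MulAction G X]

/-- `Γ` acts by `σ`-isometries. -/
def SigmaEquivariant (σ : X → X → ℝ → X) : Prop :=
  ∀ (g : G) (x y : X), ∀ t ∈ Set.Icc (0:ℝ) 1, g • σ x y t = σ (g • x) (g • y) t

end Group

/-- The quotient space `Γ\X`. -/
def QuotX (G : Type*) (X : Type*) [Group G] [MulAction G X] [MetricSpace X] :=
  Quotient (MulAction.orbitRel G X)

section Quot

variable (G : Type*) [Group G] [MulAction G X] [IsIsometricSMul G X]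

private lemma bddb (x y : X) : BddBelow (Set.range fun g : G => dist x (g • y)) :=
  ⟨0, by rintro _ ⟨g, rfl⟩; exact dist_nonneg⟩

/-- The quotient distance `d(πx,πy) = inf_g d(x, g·y)`. -/
def qdist (a b : QuotX G X) : ℝ :=
  ⨅ g : G, dist (Quotient.out a) (g • Quotient.out b)

private lemma qdist_self (a : QuotX G X) : qdist G a a = 0 := by
  refine le_antisymm ?_ (le_ciInf fun g => dist_nonneg)
  have h := ciInf_le (bddb G (Quotient.out a) (Quotient.out a)) (1 : G)
  simpa [qdist] using h

private lemma qdist_comm_le (a b : QuotX G X) : qdist G a b ≤ qdist G b a := by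
  refine le_ciInf fun g => ?_
  have h := ciInf_le (bddb G (Quotient.out a) (Quotient.out b)) g⁻¹
  refine h.trans_eq ?_
  rw [← dist_smul g (Quotient.out a) (g⁻¹ • Quotient.out b), smul_inv_smul, dist_comm]

private lemma qdist_triangle (a b c : QuotX G X) :
    qdist G a c ≤ qdist G a b + qdist G b c := by
  refine le_of_forall_pos_le_add fun ε hε => ?_
  have h1 : qdist G a b < qdist G a b + ε / 2 := lt_add_of_pos_right _ (half_pos hε)
  have h2 : qdist G b c < qdist G b c + ε / 2 := lt_add_of_pos_right _ (half_pos hε)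
  obtain ⟨g, hg⟩ := exists_lt_of_ciInf_lt h1
  obtain ⟨h, hh⟩ := exists_lt_of_ciInf_lt h2
  have key : qdist G a c ≤ dist (Quotient.out a) ((g * h) • Quotient.out c) :=
    ciInf_le (bddb G _ _) (g * h)
  have e : dist (g • Quotient.out b) ((g * h) • Quotient.out c)
      = dist (Quotient.out b) (h • Quotient.out c) := by
    rw [mul_smul, dist_smul]
  have tri := dist_triangle (Quotient.out a) (g • Quotient.out b) ((g * h) • Quotient.out c)
  rw [e] at tri
  have := key.trans tri
  linarith

/-- The quotient pseudometric on `Γ\X` (a genuine metric whenever the action is discrete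
and free). -/
instance : PseudoMetricSpace (QuotX G X) where
  dist := qdist G
  dist_self := qdist_self G
  dist_comm a b := le_antisymm (qdist_comm_le G a b) (qdist_comm_le G b a)
  dist_triangle := qdist_triangle G

/-- The projection `π : X → Γ\X`. -/
def projQ (x : X) : QuotX G X := Quotient.mk (MulAction.orbitRel G X) x

lemma projQ_dist_le (x y : X) : dist (projQ G x) (projQ G y) ≤ dist x y := by
  obtain ⟨k, hk⟩ := MulAction.mem_orbit_iff.mp
    ((MulAction.orbitRel_apply (G := G)).mp (Quotient.mk_out (s := MulAction.orbitRel G X) x))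
  obtain ⟨l, hl⟩ := MulAction.mem_orbit_iff.mp
    ((MulAction.orbitRel_apply (G := G)).mp (Quotient.mk_out (s := MulAction.orbitRel G X) y))
  have h1 : dist (projQ G x) (projQ G y)
      ≤ dist (Quotient.out (projQ G x)) ((k * l⁻¹) • Quotient.out (projQ G y)) :=
    ciInf_le (bddb G _ _) (k * l⁻¹)
  have hk2 : Quotient.out (projQ G x) = k • x := hk.symm
  have hl2 : Quotient.out (projQ G y) = l • y := hl.symm
  rw [hk2, hl2, smul_smul, inv_mul_cancel_right, dist_smul] at h1
  exact h1

/-- `π` as a continuous (1-Lipschitz) map. -/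
def projCM : C(X, QuotX G X) :=
  ⟨projQ G, (LipschitzWith.of_dist_le_mul (K := 1) fun a b => by
    simpa using projQ_dist_le G a b).continuous⟩

end Quot

end Paper

namespace Paper

variable {X : Type*} [MetricSpace X]

/-- The space of local geodesic lines of a (pseudo)metric space `Y`, as a subset of the space
of continuous maps `ℝ → Y` (with the topology of uniform convergence on compact sets). -/
def LocGeodSet (Y : Type*) [PseudoMetricSpace Y] : Set C(ℝ, Y) :=
  {γ | ∀ t : ℝ, ∃ ε > 0, ∀ s ∈ Set.Icc (t - ε) (t + ε), ∀ u ∈ Set.Icc (t - ε) (t + ε),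
    dist (γ s) (γ u) = |s - u|}

/-- The set of (parametrized) `σ`-geodesic lines of `X`. -/
def SigmaGeodLines (σ : X → X → ℝ → X) : Set C(ℝ, X) := {γ | IsSigmaGeodLine σ ⇑γ}

section Proj

variable (G : Type*) [Group G] [MulAction G X] [IsIsometricSMul G X]

/-- Post-composition with the projection `π : X → Γ\X`. -/
def projComp (γ : C(ℝ, X)) : C(ℝ, QuotX G X) := (projCM G).comp γ

/-- The space `Loc-Geod_σ(Γ\X)`: the image of the `σ`-geodesic lines of `X` under `Π`. -/
def LocGeodQuotSet (σ : X → X → ℝ → X) : Set C(ℝ, QuotX G X) :=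
  projComp G '' SigmaGeodLines σ

end Proj

/-- Translation of `ℝ` by `c`, as a continuous map. -/
def trCM (c : ℝ) : C(ℝ, ℝ) := ⟨fun t => t + c, continuous_add_right c⟩

/-- The reparametrization flow `Φ_c γ = γ(· + c)`. -/
def shiftCM {Y : Type*} [TopologicalSpace Y] (c : ℝ) (γ : C(ℝ, Y)) : C(ℝ, Y) := γ.comp (trCM c)

lemma shift_sigma {σ : X → X → ℝ → X} (c : ℝ) {γ : ℝ → X} (h : IsSigmaGeodLine σ γ) :
    IsSigmaGeodLine σ fun t => γ (t + c) := by
  constructor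
  · exact h.isom.comp (Isometry.of_dist_eq fun a b => dist_add_right a b c)
  · intro s t hst l hl
    have h2 := h.seg (s + c) (t + c) (by linarith) l hl
    calc σ (γ (s + c)) (γ (t + c)) l = γ (s + c + l * (t + c - (s + c))) := h2
    _ = γ (s + l * (t - s) + c) := by ring_nf

section Flow

variable (G : Type*) [Group G] [MulAction G X] [IsIsometricSMul G X]

lemma shift_mem {σ : X → X → ℝ → X} (c : ℝ) {γ : C(ℝ, QuotX G X)}
    (h : γ ∈ LocGeodQuotSet G σ) : shiftCM c γ ∈ LocGeodQuotSet G σ := by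
  obtain ⟨γ', hγ', rfl⟩ := h
  exact ⟨shiftCM c γ', shift_sigma c hγ', ContinuousMap.ext fun t => rfl⟩

/-- The time-one map `Φ₁` of the reparametrization flow on `Loc-Geod_σ(Γ\X)`. -/
def flowOne (σ : X → X → ℝ → X) : ↥(LocGeodQuotSet G σ) → ↥(LocGeodQuotSet G σ) :=
  fun γ => ⟨shiftCM 1 γ.1, shift_mem G 1 γ.2⟩

end Flow

/-- The class `F` of admissible weight functions. -/
structure AdmissibleF (f : ℝ → ℝ) : Prop where
  cont : Continuous f
  pos : ∀ s, 0 < f s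
  symm : ∀ s : ℝ, f (-s) = f s
  integrable : MeasureTheory.Integrable f
  mass : ∫ s, f s = 1
  momentIntegrable : MeasureTheory.Integrable fun s : ℝ => 2 * |s| * f s

/-- The constant `C(f) = ∫ 2|s| f(s) ds`. -/
def Cf (f : ℝ → ℝ) : ℝ := ∫ s : ℝ, 2 * |s| * f s

/-- The distance `f(γ,γ') = ∫ d(γ(s),γ'(s)) f(s) ds` on spaces of (local) geodesics. -/
def fDist (f : ℝ → ℝ) {Y : Type*} [PseudoMetricSpace Y] (γ γ' : C(ℝ, Y)) : ℝ :=
  ∫ s : ℝ, dist (γ s) (γ' s) * f s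

section Dynamics

variable {Y : Type*}

/-- The dynamical distance `d^n(y,y') = max_{0 ≤ i ≤ n-1} d(T^i y, T^i y')`. -/
def dynDist (d : Y → Y → ℝ) (T : Y → Y) (n : ℕ) (a b : Y) : ℝ :=
  ⨆ i : Fin n, d (T^[(i : ℕ)] a) (T^[(i : ℕ)] b)

/-- The dynamical ball `B_{d^n}(a,r)`. -/
def dynBall (d : Y → Y → ℝ) (T : Y → Y) (n : ℕ) (a : Y) (r : ℝ) : Set Y :=
  {b | dynDist d T n a b < r}

/-- The covering number of `K` at scale `r` with respect to a distance function `d`. -/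
def covNum (d : Y → Y → ℝ) (K : Set Y) (r : ℝ) : ℕ :=
  sInf {m : ℕ | ∃ c : Fin m → Y, K ⊆ ⋃ i, {b | d (c i) b < r}}

/-- The Bowen entropy of `K` w.r.t. `d`: `lim_{r→0} limsup_n (1/n) log Cov_{d^n}(K,r)`. -/
def covEntropy (d : Y → Y → ℝ) (T : Y → Y) (K : Set Y) : EReal :=
  ⨆ r : {r : ℝ // 0 < r},
    limsup (fun n : ℕ => ((Real.log (covNum (dynDist d T n) K r.1) / n : ℝ) : EReal)) atTop

/-- The entropy of (the join of the first `n` iterates of) a finite measurable partition. -/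
def partitionEnt [MeasurableSpace Y] (μ : Measure Y) (T : Y → Y) {k : ℕ}
    (P : Fin k → Set Y) (n : ℕ) : ℝ :=
  ∑ a : Fin n → Fin k, Real.negMulLog (μ (⋂ i : Fin n, T^[(i : ℕ)] ⁻¹' P (a i))).toReal

/-- The Kolmogorov–Sinai entropy of `μ`. -/
def ksEntropy [MeasurableSpace Y] (μ : Measure Y) (T : Y → Y) : EReal :=
  ⨆ (k : ℕ) (P : Fin k → Set Y)
    (_ : (∀ i, MeasurableSet (P i)) ∧ Pairwise (Function.onFun Disjoint P) ∧
      ⋃ i, P i = Set.univ),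
    ((liminf (fun n : ℕ => partitionEnt μ T P n / n) atTop : ℝ) : EReal)

/-- `d` is the distance of a metric inducing the topology of `Y`. -/
def InducesTopology [ts : TopologicalSpace Y] (d : Y → Y → ℝ) : Prop :=
  ∃ m : MetricSpace Y, m.toPseudoMetricSpace.toUniformSpace.toTopologicalSpace = ts ∧
    ∀ a b : Y, @dist Y m.toPseudoMetricSpace.toDist a b = d a b

/-- `d` is the distance of a complete metric inducing the topology of `Y`. -/
def InducesTopologyComplete [ts : TopologicalSpace Y] (d : Y → Y → ℝ) : Prop :=
  ∃ m : MetricSpace Y, m.toPseudoMetricSpace.toUniformSpace.toTopologicalSpace = ts ∧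
    (∀ a b : Y, @dist Y m.toPseudoMetricSpace.toDist a b = d a b) ∧
    @CompleteSpace Y m.toPseudoMetricSpace.toUniformSpace

/-- The upper local entropy of `μ` with respect to the distance `d`. -/
def upperLocalEnt [MeasurableSpace Y] (μ : Measure Y) (T : Y → Y) (d : Y → Y → ℝ) : EReal :=
  essSup (fun y : Y =>
    ⨆ r : {r : ℝ // 0 < r},
      limsup (fun n : ℕ =>
        ((-Real.log (μ (dynBall d T n y r.1)).toReal / n : ℝ) : EReal)) atTop) μ

/-- The lower local entropy of `μ` with respect to the distance `d`. -/
def lowerLocalEnt [MeasurableSpace Y] (μ : Measure Y) (T : Y → Y) (d : Y → Y → ℝ) : EReal :=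
  essInf (fun y : Y =>
    ⨆ r : {r : ℝ // 0 < r},
      liminf (fun n : ℕ =>
        ((-Real.log (μ (dynBall d T n y r.1)).toReal / n : ℝ) : EReal)) atTop) μ

/-- The ergodic invariant probability measures of `(Y,T)`. -/
def ErgProb [MeasurableSpace Y] (T : Y → Y) :=
  {μ : Measure Y // IsProbabilityMeasure μ ∧ Ergodic T μ}

/-- The topological entropy, defined as the supremum of the Kolmogorov–Sinai entropies of the
ergodic invariant probability measures. -/
def topEnt [MeasurableSpace Y] (T : Y → Y) : EReal :=
  ⨆ μ : ErgProb T, ksEntropy μ.1 T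

/-- The upper local entropy of the system: `sup_μ inf_d` of the upper local entropies. -/
def upperLocalEntSys [TopologicalSpace Y] [MeasurableSpace Y] (T : Y → Y) : EReal :=
  ⨆ μ : ErgProb T, ⨅ d : {d : Y → Y → ℝ // InducesTopologyComplete d},
    upperLocalEnt μ.1 T d.1

/-- The lower local entropy of the system: `sup_μ inf_d` of the lower local entropies. -/
def lowerLocalEntSys [TopologicalSpace Y] [MeasurableSpace Y] (T : Y → Y) : EReal :=
  ⨆ μ : ErgProb T, ⨅ d : {d : Y → Y → ℝ // InducesTopologyComplete d},
    lowerLocalEnt μ.1 T d.1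

/-- The invariant topological entropy: in the Bowen formula the supremum is restricted to the
compact `T`-invariant subsets. -/
def invTopEnt [TopologicalSpace Y] (T : Y → Y) : EReal :=
  ⨅ d : {d : Y → Y → ℝ // InducesTopology d},
    ⨆ K : {K : Set Y // IsCompact K ∧ T '' K = K}, covEntropy d.1 T K.1

end Dynamics

end Paper

namespace Paper

/-- The action of an isometry `g` on continuous maps `ℝ → X` by postcomposition. -/
def smulCM {X : Type*} [MetricSpace X] (G : Type*) [Group G] [MulAction G X]
    [IsIsometricSMul G X] (g : G) (γ : C(ℝ, X)) : C(ℝ, X) :=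
  ⟨fun t => g • γ t, ((isometry_smul X g).continuous).comp γ.continuous⟩

end Paper

open Paper in
/-- Let `Γ = G` be a group of isometries of a proper metric space `X` acting
discretely and freely. Then the induced action of `Γ` on `Loc-Geod(X)` is properly
discontinuous: every local geodesic has an open neighbourhood `U` such that the only `g ∈ Γ`
with `gU ∩ U ≠ ∅` (within `Loc-Geod(X)`) is the identity. -/
theorem statement_10 {X : Type*} [MetricSpace X] [ProperSpace X]
    (G : Type*) [Group G] [MulAction G X] [IsIsometricSMul G X]
    (hdisc : DiscreteAction G X) (hfree : FreeAction G X) :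
    ∀ γ ∈ LocGeodSet X, ∃ U : Set C(ℝ, X), IsOpen U ∧ γ ∈ U ∧
      ∀ g : G, (∃ η ∈ U ∩ LocGeodSet X, smulCM G g η ∈ U ∩ LocGeodSet X) → g = 1 := by
  intro γ _
  set x := γ 0 with hx
  have hS : {g : G | dist x (g • x) ≤ 2}.Finite := hdisc x 2
  classical
  set F : Finset G := hS.toFinset with hF
  set T : Finset ℝ := (F.erase 1).image (fun g => dist x (g • x) / 5) with hT
  set ε : ℝ := (insert (1/2 : ℝ) T).min' (Finset.insert_nonempty _ _) with hε
  have hεmem : ε ∈ insert (1/2 : ℝ) T := Finset.min'_mem _ _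
  have hεpos : 0 < ε := by
    rcases Finset.mem_insert.mp hεmem with h | h
    · rw [h]; norm_num
    · obtain ⟨g, hg, heq⟩ := Finset.mem_image.mp h
      have hg1 : g ≠ 1 := (Finset.mem_erase.mp hg).1
      have : g • x ≠ x := fun hc => hg1 (hfree g x hc)
      have : 0 < dist x (g • x) := dist_pos.mpr (Ne.symm this)
      rw [← heq]; linarith
  have hεhalf : ε ≤ 1/2 := Finset.min'_le _ _ (Finset.mem_insert_self _ _)
  refine ⟨(fun η : C(ℝ, X) => η 0) ⁻¹' Metric.ball x ε, ?_, ?_, ?_⟩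
  · exact Metric.isOpen_ball.preimage (continuous_eval_const 0)
  · exact Metric.mem_ball_self (x := x) hεpos
  · rintro g ⟨η, ⟨hη, -⟩, hgη, -⟩
    have h1 : dist (η 0) x < ε := by simpa [Metric.mem_ball] using hη
    have h2 : dist (g • η 0) x < ε := by
      simpa [Metric.mem_ball, smulCM] using hgη
    have h3 : dist (g • η 0) (g • x) = dist (η 0) x := dist_smul g _ _
    have h4 : dist x (g • x) < 4 * ε := by
      calc dist x (g • x) ≤ dist x (g • η 0) + dist (g • η 0) (g • x) := dist_triangle _ _ _
        _ = dist (g • η 0) x + dist (η 0) x := by rw [h3, dist_comm]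
        _ < 4 * ε := by linarith
    have hgF : g ∈ F := by
      rw [hF, Set.Finite.mem_toFinset]
      exact le_trans h4.le (by linarith)
    by_contra hg1
    have : dist x (g • x) / 5 ∈ insert (1/2 : ℝ) T :=
      Finset.mem_insert_of_mem (Finset.mem_image.mpr
        ⟨g, Finset.mem_erase.mpr ⟨hg1, hgF⟩, rfl⟩)
    have h5 : ε ≤ dist x (g • x) / 5 := Finset.min'_le _ _ this
    linarith
end
end

section
/- Let (X,σ) be a GCB-space and Γ a group of σ-isometries of X acting discretely and freely. Then for every f ∈ F, the metric induced by f on Loc-Geod_σ(Γ\X) is complete; moreover Loc-Geod_σ(Γ\X) is a closed subset of Loc-Geod(Γ\X). -/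
open Filter Metric Set MeasureTheory Topology
open scoped ENNReal NNReal

noncomputable section

set_option linter.unusedSectionVars false

namespace Paper

section Aux

variable {X : Type*} [MetricSpace X]
variable (G : Type*) [Group G] [MulAction G X] [IsIsometricSMul G X]

lemma projQ_out (a : QuotX G X) : projQ G (Quotient.out a) = a := Quotient.out_eq a

lemma projQ_smul (g : G) (x : X) : projQ G (g • x) = projQ G x :=
  Quotient.sound ((MulAction.orbitRel_apply (G := G)).mpr (MulAction.mem_orbit x g))

lemma dist_projQ (x y : X) :
    dist (projQ G x) (projQ G y) = ⨅ g : G, dist x (g • y) := by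
  obtain ⟨k, hk⟩ := MulAction.mem_orbit_iff.mp
    ((MulAction.orbitRel_apply (G := G)).mp (Quotient.mk_out (s := MulAction.orbitRel G X) x))
  obtain ⟨l, hl⟩ := MulAction.mem_orbit_iff.mp
    ((MulAction.orbitRel_apply (G := G)).mp (Quotient.mk_out (s := MulAction.orbitRel G X) y))
  have hd : dist (projQ G x) (projQ G y)
      = ⨅ g : G, dist (Quotient.out (projQ G x)) (g • Quotient.out (projQ G y)) := rfl
  have hk' : k • x = Quotient.out (projQ G x) := hk
  have hl' : l • y = Quotient.out (projQ G y) := hl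
  rw [hd, ← hk', ← hl']
  apply le_antisymm
  · refine le_ciInf fun g => ?_
    have h := ciInf_le (bddb G (k • x) (l • y)) (k * g * l⁻¹)
    refine h.trans_eq ?_
    rw [smul_smul, inv_mul_cancel_right, mul_smul, dist_smul]
  · refine le_ciInf fun g => ?_
    have h := ciInf_le (bddb G x y) (k⁻¹ * g * l)
    refine h.trans_eq ?_
    rw [show g • l • y = k • (k⁻¹ * g * l) • y by rw [smul_smul, smul_smul]; group,
      dist_smul]

variable {G}

lemma exists_min (hdisc : DiscreteAction G X) (x y : X) :
    ∃ g : G, ∀ g' : G, dist x (g • y) ≤ dist x (g' • y) := by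
  set r := dist x ((1 : G) • y) with hr
  have hS : {g : G | dist x (g • y) ≤ r}.Finite := by
    refine (hdisc y (dist x y + r)).subset fun g hg => ?_
    have : dist y (g • y) ≤ dist y x + dist x (g • y) := dist_triangle _ _ _
    simp only [Set.mem_setOf_eq] at hg ⊢
    rw [dist_comm y x] at this
    linarith
  have hne : ({g : G | dist x (g • y) ≤ r}).Nonempty := ⟨1, show dist x ((1:G) • y) ≤ r from le_rfl⟩
  obtain ⟨g, hgS, hgmin⟩ := Set.exists_min_image _ (fun g => dist x (g • y)) hS hne
  refine ⟨g, fun g' => ?_⟩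
  by_cases hg' : g' ∈ {g : G | dist x (g • y) ≤ r}
  · exact hgmin g' hg'
  · have h1 : dist x (g • y) ≤ r := hgS
    have h2 : r < dist x (g' • y) := lt_of_not_ge hg'
    linarith

lemma exists_smul_lift (hdisc : DiscreteAction G X) (x z : X) :
    ∃ g : G, dist x (g • z) = dist (projQ G x) (projQ G z) ∧
      ∀ g' : G, dist x (g • z) ≤ dist x (g' • z) := by
  obtain ⟨g, hg⟩ := exists_min hdisc x z
  refine ⟨g, ?_, hg⟩
  rw [dist_projQ]
  exact le_antisymm (le_ciInf hg) (ciInf_le (bddb G x z) g)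

lemma quot_eq_of_dist_eq_zero (hdisc : DiscreteAction G X) {a b : QuotX G X}
    (h : dist a b = 0) : a = b := by
  obtain ⟨g, hg, -⟩ := exists_smul_lift hdisc (Quotient.out a) (Quotient.out b)
  rw [projQ_out, projQ_out, h] at hg
  have : Quotient.out a = g • Quotient.out b := dist_eq_zero.mp hg
  rw [← projQ_out G a, ← projQ_out G b, this, projQ_smul]

lemma exists_lift (hdisc : DiscreteAction G X) (x : X) (a : QuotX G X) :
    ∃ y : X, projQ G y = a ∧ dist x y = dist (projQ G x) a := by
  obtain ⟨g, hg, -⟩ := exists_smul_lift hdisc x (Quotient.out a)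
  exact ⟨g • Quotient.out a, by rw [projQ_smul, projQ_out], by rw [hg, projQ_out]⟩

end Aux

end Paper
namespace Paper

section Rad

set_option linter.unusedSectionVars false

variable {X : Type*} [MetricSpace X]
variable (G : Type*) [Group G] [MulAction G X] [IsIsometricSMul G X]

/-- A positive lower bound for the displacement of `x` by nontrivial elements of `G`. -/
def rad (x : X) : ℝ :=
  sInf (insert 1 {d : ℝ | (∃ g : G, g ≠ 1 ∧ dist x (g • x) = d) ∧ d ≤ 1})

variable {G}

lemma radSet_finite (hdisc : DiscreteAction G X) (x : X) :
    (insert 1 {d : ℝ | (∃ g : G, g ≠ 1 ∧ dist x (g • x) = d) ∧ d ≤ 1}).Finite := by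
  refine Set.Finite.insert _ (((hdisc x 1).image (fun g => dist x (g • x))).subset ?_)
  rintro d ⟨⟨g, hg, rfl⟩, hd1⟩
  exact ⟨g, hd1, rfl⟩

lemma radSet_bddBelow (x : X) :
    BddBelow (insert 1 {d : ℝ | (∃ g : G, g ≠ 1 ∧ dist x (g • x) = d) ∧ d ≤ 1}) := by
  refine ⟨0, ?_⟩
  rintro d (rfl | ⟨⟨g, hg, rfl⟩, -⟩)
  · exact zero_le_one
  · exact dist_nonneg

lemma rad_pos (hdisc : DiscreteAction G X) (hfree : FreeAction G X) (x : X) :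
    0 < rad G x := by
  have hmem := (Set.Nonempty.csInf_mem (s := insert 1
      {d : ℝ | (∃ g : G, g ≠ 1 ∧ dist x (g • x) = d) ∧ d ≤ 1})
      ⟨1, Set.mem_insert _ _⟩ (radSet_finite hdisc x))
  rcases hmem with h | ⟨⟨g, hg, hd⟩, -⟩
  · rw [rad, h]; exact one_pos
  · rw [rad, ← hd]
    rcases (dist_nonneg (x := x) (y := g • x)).lt_or_eq with h | h
    · exact h
    · exact absurd (hfree g x (dist_eq_zero.mp h.symm).symm) hg

lemma rad_le_one (x : X) : rad G x ≤ 1 :=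
  csInf_le (radSet_bddBelow x) (Set.mem_insert _ _)

lemma rad_le_dist {g : G} (hg : g ≠ 1) (x : X) : rad G x ≤ dist x (g • x) := by
  by_cases h : dist x (g • x) ≤ 1
  · exact csInf_le (radSet_bddBelow x) (Set.mem_insert_of_mem _ ⟨⟨g, hg, rfl⟩, h⟩)
  · exact (rad_le_one x).trans (le_of_not_ge h)

lemma rad_lip (x y : X) : rad G x - 2 * dist x y ≤ rad G y := by
  refine le_csInf ⟨1, Set.mem_insert _ _⟩ ?_
  rintro d (rfl | ⟨⟨g, hg, rfl⟩, -⟩)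
  · have := rad_le_one (G := G) x
    have := dist_nonneg (x := x) (y := y)
    linarith
  · have h1 : dist x (g • x) ≤ dist x y + dist y (g • y) + dist (g • y) (g • x) :=
      dist_triangle4 _ _ _ _
    have h2 : dist (g • y) (g • x) = dist x y := by rw [dist_smul, dist_comm]
    have h3 := rad_le_dist (G := G) hg x
    linarith

lemma rad_smul (g : G) (x : X) : rad G (g • x) = rad G x := by
  unfold rad
  congr 1
  ext d
  simp only [Set.mem_insert_iff, Set.mem_setOf_eq]
  refine or_congr Iff.rfl (and_congr ?_ Iff.rfl)
  constructor
  · rintro ⟨h, hh, rfl⟩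
    refine ⟨g⁻¹ * h * g, ?_, ?_⟩
    · intro hc
      apply hh
      have : g * (g⁻¹ * h * g) * g⁻¹ = g * 1 * g⁻¹ := by rw [hc]
      group at this
      simpa using this.symm ▸ rfl
    · rw [show h • g • x = g • (g⁻¹ * h * g) • x by rw [smul_smul, smul_smul]; group,
        dist_smul]
  · rintro ⟨h, hh, rfl⟩
    refine ⟨g * h * g⁻¹, ?_, ?_⟩
    · intro hc
      apply hh
      have : g⁻¹ * (g * h * g⁻¹) * g = g⁻¹ * 1 * g := by rw [hc]
      group at this
      simpa using this.symm ▸ rfl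
    · rw [show (g * h * g⁻¹) • g • x = g • h • x by rw [smul_smul, smul_smul]; group,
        dist_smul]

variable (G)

/-- The induced systole-type function on the quotient. -/
def radQ (a : QuotX G X) : ℝ := rad G (Quotient.out a)

variable {G}

lemma radQ_projQ (x : X) : radQ G (projQ G x) = rad G x := by
  obtain ⟨k, hk⟩ := MulAction.mem_orbit_iff.mp
    ((MulAction.orbitRel_apply (G := G)).mp (Quotient.mk_out (s := MulAction.orbitRel G X) x))
  have hk' : k • x = Quotient.out (projQ G x) := hk
  rw [radQ, ← hk', rad_smul]

lemma radQ_pos (hdisc : DiscreteAction G X) (hfree : FreeAction G X) (a : QuotX G X) :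
    0 < radQ G a := rad_pos hdisc hfree _

lemma radQ_lip (hdisc : DiscreteAction G X) (a b : QuotX G X) :
    radQ G a - 2 * dist a b ≤ radQ G b := by
  obtain ⟨g, hg, -⟩ := exists_smul_lift hdisc (Quotient.out a) (Quotient.out b)
  rw [projQ_out, projQ_out] at hg
  have h1 := rad_lip (G := G) (Quotient.out a) (g • Quotient.out b)
  rw [rad_smul] at h1
  rw [radQ, radQ, ← hg]
  exact h1

lemma rad_eq_radQ (x : X) : rad G x = radQ G (projQ G x) := (radQ_projQ x).symm

end Rad

end Paper
namespace Paper

section Tools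

set_option linter.unusedSectionVars false

variable {X : Type*} [MetricSpace X]
variable {G : Type*} [Group G] [MulAction G X] [IsIsometricSMul G X]

/-- Uniform positive lower bound for `radQ` along a continuous curve, on a compact interval. -/
lemma exists_unifRad (hdisc : DiscreteAction G X) (hfree : FreeAction G X)
    {ξ : ℝ → QuotX G X} (hξ : Continuous ξ) (R : ℝ) :
    ∃ ρ > 0, ∀ t ∈ Set.Icc (-R) R, ρ ≤ radQ G (ξ t) := by
  rcases Set.eq_empty_or_nonempty (Set.Icc (-R) R) with he | hne
  · exact ⟨1, one_pos, fun t ht => absurd (he ▸ ht) (Set.notMem_empty t)⟩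
  have hcov : Set.Icc (-R) R ⊆ ⋃ s : ℝ, ξ ⁻¹' Metric.ball (ξ s) (radQ G (ξ s) / 4) := by
    intro t ht
    exact Set.mem_iUnion.mpr ⟨t, by
      simp [Metric.mem_ball, div_pos (radQ_pos hdisc hfree (ξ t)) (by norm_num : (0:ℝ) < 4)]⟩
  obtain ⟨F, hF⟩ := isCompact_Icc.elim_finite_subcover
    (fun s : ℝ => ξ ⁻¹' Metric.ball (ξ s) (radQ G (ξ s) / 4))
    (fun s => (Metric.isOpen_ball).preimage hξ) hcov
  obtain ⟨t₀, ht₀⟩ := hne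
  obtain ⟨i₀, hi₀l, hi₀⟩ := Set.mem_iUnion₂.mp (hF ht₀)
  have hFne : F.Nonempty := ⟨i₀, hi₀l⟩
  refine ⟨F.inf' hFne (fun s => radQ G (ξ s) / 2), ?_, ?_⟩
  · rw [gt_iff_lt, Finset.lt_inf'_iff]
    exact fun s _ => half_pos (radQ_pos hdisc hfree (ξ s))
  · intro t ht
    obtain ⟨s, hsF, hs⟩ := Set.mem_iUnion₂.mp (hF ht)
    have hd : dist (ξ s) (ξ t) < radQ G (ξ s) / 4 := by
      rw [dist_comm]; exact Metric.mem_ball.mp hs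
    have := radQ_lip hdisc (ξ s) (ξ t)
    have h2 := Finset.inf'_le (fun s => radQ G (ξ s) / 2) hsF
    linarith

/-- If both a lift distance and the quotient distance at a point are together smaller than
the local injectivity radius, they agree. -/
lemma lift_dist_eq (hdisc : DiscreteAction G X) {x y : X} {ρ : ℝ}
    (hrad : ρ ≤ rad G x)
    (hsum : dist x y + dist (projQ G x) (projQ G y) < ρ) :
    dist x y = dist (projQ G x) (projQ G y) := by
  obtain ⟨g, hg, -⟩ := exists_smul_lift hdisc x y
  by_cases h1 : g = 1
  · rw [← hg, h1, one_smul]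
  · exfalso
    have h2 : dist x (g • x) ≤ dist x (g • y) + dist (g • y) (g • x) := dist_triangle _ _ _
    have h3 : dist (g • y) (g • x) = dist x y := by rw [dist_smul, dist_comm]
    have h4 := rad_le_dist (G := G) h1 x
    rw [hg, h3] at h2
    linarith

/-- Rigidity: two continuous lifts that are close in the quotient along a compact interval and
close in `X` at one point remain at the quotient distance throughout the interval. -/
lemma rigidity (hdisc : DiscreteAction G X) {α β : ℝ → X} (hα : Continuous α)
    (hβ : Continuous β) {a b ρ : ℝ} (hρ : 0 < ρ)
    (hrad : ∀ t ∈ Set.Icc a b, ρ ≤ rad G (α t))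
    (hq : ∀ t ∈ Set.Icc a b, dist (projQ G (α t)) (projQ G (β t)) < ρ / 4)
    {t₀ : ℝ} (ht₀ : t₀ ∈ Set.Icc a b) (h₀ : dist (α t₀) (β t₀) < ρ / 4) :
    ∀ t ∈ Set.Icc a b, dist (α t) (β t) = dist (projQ G (α t)) (projQ G (β t)) := by
  have hφ : Continuous fun t => dist (α t) (β t) := hα.dist hβ
  have key : ∀ t ∈ Set.Icc a b, dist (α t) (β t) < ρ / 2 := by
    by_contra hcon
    push_neg at hcon
    obtain ⟨t₁, ht₁, ht₁'⟩ := hcon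
    have hsub : Set.uIcc t₀ t₁ ⊆ Set.Icc a b := Set.uIcc_subset_Icc ht₀ ht₁
    have hIVT := intermediate_value_uIcc (f := fun t => dist (α t) (β t))
      (a := t₀) (b := t₁) (hφ.continuousOn)
    have hmem : ρ / 3 ∈ Set.uIcc (dist (α t₀) (β t₀)) (dist (α t₁) (β t₁)) := by
      rw [Set.mem_uIcc]
      left
      constructor <;> linarith
    obtain ⟨s, hs, hseq'⟩ := hIVT hmem
    have hseq : dist (α s) (β s) = ρ / 3 := hseq'
    have hsI := hsub hs
    have heq := lift_dist_eq hdisc (hrad s hsI)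
      (by have := hq s hsI; rw [hseq]; linarith)
    rw [hseq] at heq
    have := hq s hsI
    linarith
  intro t ht
  exact lift_dist_eq hdisc (hrad t ht) (by have := key t ht; have := hq t ht; linarith)

/-- The action maps `σ`-geodesic lines to `σ`-geodesic lines. -/
lemma smul_line {σ : X → X → ℝ → X} (hequiv : SigmaEquivariant G σ) (g : G) {γ : ℝ → X}
    (h : IsSigmaGeodLine σ γ) : IsSigmaGeodLine σ (fun t => g • γ t) := by
  constructor
  · refine Isometry.of_dist_eq fun s t => ?_
    rw [dist_smul]
    exact h.isom.dist_eq s t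
  · intro s t hst l hl
    rw [← hequiv g (γ s) (γ t) l hl, h.seg s t hst l hl]

/-- Endpoint continuity of a convex bicombing. -/
lemma sigma_dist_le {σ : X → X → ℝ → X} (hGCB : IsGCB σ) (x y x' y' : X) {l : ℝ}
    (hl : l ∈ Set.Icc (0:ℝ) 1) :
    dist (σ x y l) (σ x' y' l) ≤ (1 - l) * dist x x' + l * dist y y' := by
  have hc := hGCB.convex x y x' y'
  have h := hc.2 (Set.left_mem_Icc.mpr zero_le_one) (Set.right_mem_Icc.mpr zero_le_one)
    (by linarith [hl.2] : (0:ℝ) ≤ 1 - l) hl.1 (by ring)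
  simp only [smul_eq_mul, mul_zero, mul_one, zero_add] at h
  rw [hGCB.source, hGCB.source, hGCB.target, hGCB.target] at h
  exact h

/-- A tail geometric bound on successive distances gives a Cauchy sequence. -/
lemma cauchySeq_of_tail_geometric {Y : Type*} [PseudoMetricSpace Y] {F : ℕ → Y} {j₀ : ℕ}
    (h : ∀ j, j₀ ≤ j → dist (F j) (F (j + 1)) ≤ (1/2 : ℝ) ^ j) : CauchySeq F := by
  rw [Metric.cauchySeq_iff']
  intro ε hε
  obtain ⟨J, hJ⟩ := exists_pow_lt_of_lt_one (half_pos hε) (by norm_num : (1/2 : ℝ) < 1)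
  refine ⟨max j₀ J, fun n hn => ?_⟩
  set N := max j₀ J with hN
  have hchain : ∀ k, dist (F N) (F (N + k)) ≤ 2 * (1/2 : ℝ) ^ N - 2 * (1/2 : ℝ) ^ (N + k) := by
    intro k
    induction k with
    | zero => simp
    | succ k ih =>
      have h1 : dist (F N) (F (N + (k+1))) ≤
          dist (F N) (F (N + k)) + dist (F (N + k)) (F (N + k + 1)) := by
        rw [show N + (k+1) = N + k + 1 by ring]
        exact dist_triangle _ _ _
      have h2 := h (N + k) (le_trans (le_max_left _ _) (Nat.le_add_right _ _))
      have hpow : (2:ℝ) * (1/2:ℝ)^(N + (k+1)) = (1/2:ℝ)^(N+k) := by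
        rw [show N + (k+1) = (N+k) + 1 by ring, pow_succ]
        ring
      rw [hpow]
      linarith
  obtain ⟨k, rfl⟩ := Nat.exists_eq_add_of_le hn
  have h4 := hchain k
  have h5 : (1/2:ℝ)^N ≤ (1/2:ℝ)^J :=
    pow_le_pow_of_le_one (by norm_num) (by norm_num) (le_max_right _ _)
  have h6 : (0:ℝ) ≤ 2 * (1/2:ℝ)^(N+k) := by positivity
  rw [dist_comm]
  calc dist (F N) (F (N + k)) ≤ 2 * (1/2:ℝ)^N - 2*(1/2:ℝ)^(N+k) := h4
  _ ≤ 2 * (1/2:ℝ)^J := by linarith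
  _ < ε := by linarith

end Tools

end Paper
namespace Paper

section Complete

set_option linter.unusedSectionVars false

variable {X : Type*} [MetricSpace X]
variable {G : Type*} [Group G] [MulAction G X] [IsIsometricSMul G X]

/-- The quotient of a complete space by a discrete action is complete. -/
lemma quotX_complete [CompleteSpace X] (hdisc : DiscreteAction G X) :
    CompleteSpace (QuotX G X) := by
  refine Metric.complete_of_convergent_controlled_sequences (fun n => (1/2 : ℝ) ^ n)
    (fun n => by positivity) fun u hu => ?_
  -- recursively lift the sequence
  let x : ℕ → X := fun n => Nat.rec (Quotient.out (u 0))
    (fun n xn => Classical.choose (exists_lift hdisc xn (u (n + 1)))) n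
  have hx0 : x 0 = Quotient.out (u 0) := rfl
  have hxs : ∀ n, x (n + 1) = Classical.choose (exists_lift hdisc (x n) (u (n + 1))) :=
    fun n => rfl
  have hproj : ∀ n, projQ G (x n) = u n := by
    intro n
    induction n with
    | zero => rw [hx0]; exact projQ_out G (u 0)
    | succ n ih =>
      rw [hxs n]
      exact (Classical.choose_spec (exists_lift hdisc (x n) (u (n + 1)))).1
  have hdist : ∀ n, dist (x n) (x (n + 1)) = dist (u n) (u (n + 1)) := by
    intro n
    rw [hxs n]
    have := (Classical.choose_spec (exists_lift hdisc (x n) (u (n + 1)))).2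
    rw [this, hproj n]
  have hcauchy : CauchySeq x := by
    refine cauchySeq_of_tail_geometric (j₀ := 0) fun j _ => ?_
    rw [hdist j]
    exact le_of_lt (hu j j (j + 1) le_rfl (Nat.le_succ j))
  obtain ⟨p, hp⟩ := cauchySeq_tendsto_of_complete hcauchy
  refine ⟨projQ G p, ?_⟩
  have : Tendsto (fun n => projQ G (x n)) atTop (𝓝 (projQ G p)) :=
    ((projCM G).continuous.tendsto p).comp hp
  simpa only [hproj] using this

end Complete

end Paper
namespace Paper

section Main

set_option linter.unusedSectionVars false
set_option maxHeartbeats 1000000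

variable {X : Type*} [MetricSpace X]
variable {G : Type*} [Group G] [MulAction G X] [IsIsometricSMul G X]

/-- Main lifting lemma: a sequence of projected `σ`-geodesic lines that is uniformly Cauchy
on compact sets converges (uniformly on compacts, here recorded pointwise) to the projection
of a `σ`-geodesic line. -/
lemma main_lift [CompleteSpace X] {σ : X → X → ℝ → X} (hGCB : IsGCB σ)
    (hdisc : DiscreteAction G X) (hfree : FreeAction G X) (hequiv : SigmaEquivariant G σ)
    (β : ℕ → ℝ → X) (hβ : ∀ n, IsSigmaGeodLine σ (β n))
    (hC : ∀ R : ℝ, 0 < R → ∀ ε : ℝ, 0 < ε → ∃ N : ℕ, ∀ m ≥ N, ∀ n ≥ N, ∀ t : ℝ, |t| ≤ R →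
      dist (projQ G (β m t)) (projQ G (β n t)) < ε) :
    ∃ B : ℝ → X, IsSigmaGeodLine σ B ∧ ∀ t : ℝ,
      Tendsto (fun n => dist (projQ G (β n t)) (projQ G (B t))) atTop (𝓝 0) := by
  haveI : CompleteSpace (QuotX G X) := quotX_complete hdisc
  set q : ℕ → ℝ → QuotX G X := fun n t => projQ G (β n t) with hqdef
  -- pointwise limit curve in the quotient
  have hcauchy : ∀ t : ℝ, CauchySeq (fun n => q n t) := by
    intro t
    rw [Metric.cauchySeq_iff]
    intro ε hε
    obtain ⟨N, hN⟩ := hC (|t| + 1) (by positivity) ε hε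
    exact ⟨N, fun m hm n hn => hN m hm n hn t (by linarith [abs_nonneg t])⟩
  have hξex : ∀ t : ℝ, ∃ p, Tendsto (fun n => q n t) atTop (𝓝 p) :=
    fun t => cauchySeq_tendsto_of_complete (hcauchy t)
  set ξ : ℝ → QuotX G X := fun t => (hξex t).choose with hξdef
  have hξ : ∀ t, Tendsto (fun n => q n t) atTop (𝓝 (ξ t)) := fun t => (hξex t).choose_spec
  -- distances to the limit
  have hlim : ∀ (N : ℕ) (t : ℝ) (ε : ℝ), (∀ n ≥ N, dist (q N t) (q n t) < ε) →
      dist (q N t) (ξ t) ≤ ε := by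
    intro N t ε h
    refine le_of_tendsto (Tendsto.dist tendsto_const_nhds (hξ t)) ?_
    exact Filter.eventually_atTop.mpr ⟨N, fun n hn => le_of_lt (h n hn)⟩
  -- the limit curve is continuous
  have hξcont : Continuous ξ := by
    rw [Metric.continuous_iff]
    intro t ε hε
    obtain ⟨N, hN⟩ := hC (|t| + 2) (by positivity) (ε/4) (by positivity)
    refine ⟨min 1 (ε/4), lt_min one_pos (by positivity), fun s hst => ?_⟩
    have hs1 : |s| ≤ |t| + 2 := by
      have h1 : |s - t| < 1 := lt_of_lt_of_le (by simpa [Real.dist_eq] using hst) (min_le_left _ _)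
      calc |s| = |s - t + t| := by ring_nf
      _ ≤ |s - t| + |t| := abs_add_le _ _
      _ ≤ |t| + 2 := by linarith
    have ht1 : |t| ≤ |t| + 2 := by linarith
    have hbs : dist (q N s) (ξ s) ≤ ε/4 :=
      hlim N s (ε/4) (fun n hn => hN N le_rfl n hn s hs1)
    have hbt : dist (q N t) (ξ t) ≤ ε/4 :=
      hlim N t (ε/4) (fun n hn => hN N le_rfl n hn t ht1)
    have hqlip : dist (q N s) (q N t) ≤ |s - t| := by
      have h1 := projQ_dist_le G (β N s) (β N t)
      have h2 : dist (β N s) (β N t) = dist s t := (hβ N).isom.dist_eq s t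
      rw [hqdef]
      simp only []
      rw [h2, Real.dist_eq] at h1
      exact h1
    have hst' : |s - t| < ε/4 := lt_of_lt_of_le (by simpa [Real.dist_eq] using hst)
      (min_le_right _ _)
    calc dist (ξ s) (ξ t) ≤ dist (ξ s) (q N s) + dist (q N s) (q N t) + dist (q N t) (ξ t) :=
        dist_triangle4 _ _ _ _
    _ ≤ ε/4 + |s - t| + ε/4 := by rw [dist_comm (ξ s)]; gcongr
    _ < ε := by linarith
  -- uniform injectivity radius along the limit curve
  have hρex : ∀ j : ℕ, ∃ ρ > 0, ∀ t ∈ Set.Icc (-((j:ℝ)+1)) ((j:ℝ)+1), ρ ≤ radQ G (ξ t) :=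
    fun j => exists_unifRad hdisc hfree hξcont ((j:ℝ)+1)
  set ρ : ℕ → ℝ := fun j => (hρex j).choose with hρdef
  have hρpos : ∀ j, 0 < ρ j := fun j => (hρex j).choose_spec.1
  have hρ : ∀ j : ℕ, ∀ t : ℝ, |t| ≤ (j:ℝ)+1 → ρ j ≤ radQ G (ξ t) := by
    intro j t ht
    exact (hρex j).choose_spec.2 t (abs_le.mp ht)
  -- stage thresholds
  set ε' : ℕ → ℝ := fun j => min ((1/2 : ℝ)^j) (ρ j / 16) with hε'def
  have hε'pos : ∀ j, 0 < ε' j := fun j => lt_min (by positivity) (div_pos (hρpos j) (by norm_num))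
  have hε'le : ∀ j, ε' j ≤ (1/2 : ℝ)^j := fun j => min_le_left _ _
  have hε'le' : ∀ j, ε' j ≤ ρ j / 16 := fun j => min_le_right _ _
  have hnex : ∀ j : ℕ, ∃ N : ℕ, ∀ m ≥ N, ∀ n ≥ N, ∀ t : ℝ, |t| ≤ (j:ℝ)+1 →
      dist (q m t) (q n t) < ε' j := fun j => hC ((j:ℝ)+1) (by positivity) (ε' j) (hε'pos j)
  set nn : ℕ → ℕ := fun j => (hnex j).choose with hnndef
  have hnn : ∀ j, ∀ m ≥ nn j, ∀ n ≥ nn j, ∀ t : ℝ, |t| ≤ (j:ℝ)+1 →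
      dist (q m t) (q n t) < ε' j := fun j => (hnex j).choose_spec
  -- the recursively normalized lifts
  set P : ℕ → ℕ × G := fun j => Nat.rec (nn 0, (1:G)) (fun j p =>
    (max (nn (j+1)) (p.1 + 1),
      Classical.choose (exists_smul_lift hdisc (p.2 • β p.1 0)
        (β (max (nn (j+1)) (p.1 + 1)) 0)))) j with hPdef
  set m : ℕ → ℕ := fun j => (P j).1 with hmdef
  set g : ℕ → G := fun j => (P j).2 with hgdef
  set B : ℕ → ℝ → X := fun j t => g j • β (m j) t with hBdef
  have hm0 : m 0 = nn 0 := rfl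
  have hms : ∀ j, m (j+1) = max (nn (j+1)) (m j + 1) := fun j => rfl
  have hmono : StrictMono m := strictMono_nat_of_lt_succ fun j => by
    rw [hms j]; exact lt_of_lt_of_le (Nat.lt_succ_self _) (le_max_right _ _)
  have hmge : ∀ j, nn j ≤ m j := by
    intro j
    cases j with
    | zero => exact le_of_eq hm0.symm
    | succ j => rw [hms j]; exact le_max_left _ _
  have hBline : ∀ j, IsSigmaGeodLine σ (B j) := fun j => smul_line hequiv (g j) (hβ (m j))
  have hBq : ∀ j t, projQ G (B j t) = q (m j) t := by
    intro j t
    rw [hBdef]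
    exact projQ_smul G (g j) (β (m j) t)
  -- alignment at 0
  have halign : ∀ j, dist (B j 0) (B (j+1) 0) = dist (q (m j) 0) (q (m (j+1)) 0) := by
    intro j
    have hspec := Classical.choose_spec (exists_smul_lift hdisc ((P j).2 • β (P j).1 0)
      (β (max (nn (j+1)) ((P j).1 + 1)) 0))
    have h1 : dist ((P j).2 • β (P j).1 0)
        ((P (j+1)).2 • β (max (nn (j+1)) ((P j).1 + 1)) 0)
        = dist (projQ G ((P j).2 • β (P j).1 0))
          (projQ G (β (max (nn (j+1)) ((P j).1 + 1)) 0)) := hspec.1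
    have h2 : projQ G ((P j).2 • β (P j).1 0) = q (m j) 0 := projQ_smul G _ _
    rw [h2] at h1
    exact h1
  -- stage estimates and rigidity
  have hsucc : ∀ j : ℕ, ∀ t : ℝ, |t| ≤ (j:ℝ)+1 → dist (B j t) (B (j+1) t) ≤ (1/2 : ℝ)^j := by
    intro j
    have hqd : ∀ t : ℝ, |t| ≤ (j:ℝ)+1 →
        dist (q (m j) t) (q (m (j+1)) t) < ε' j := by
      intro t ht
      exact hnn j (m j) (hmge j) (m (j+1)) (le_trans (hmge j) (hmono (Nat.lt_succ_self j)).le)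
        t ht
    have hξd : ∀ t : ℝ, |t| ≤ (j:ℝ)+1 → dist (q (m j) t) (ξ t) ≤ ε' j := by
      intro t ht
      exact hlim (m j) t (ε' j) (fun n hn =>
        hnn j (m j) (hmge j) n (le_trans (hmge j) hn) t ht)
    have hrad' : ∀ t ∈ Set.Icc (-((j:ℝ)+1)) ((j:ℝ)+1), ρ j / 2 ≤ rad G (B j t) := by
      intro t ht
      have ht' : |t| ≤ (j:ℝ)+1 := abs_le.mpr ht
      have h1 : rad G (B j t) = radQ G (q (m j) t) := by
        rw [show B j t = g j • β (m j) t from rfl, rad_smul, rad_eq_radQ]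
      have h2 := radQ_lip hdisc (ξ t) (q (m j) t)
      have h3 := hρ j t ht'
      have h4 := hξd t ht'
      have h5 := hε'le' j
      have h6 := hρpos j
      rw [dist_comm] at h2
      rw [h1]
      linarith
    have hq' : ∀ t ∈ Set.Icc (-((j:ℝ)+1)) ((j:ℝ)+1),
        dist (projQ G (B j t)) (projQ G (B (j+1) t)) < (ρ j / 2) / 4 := by
      intro t ht
      rw [hBq j t, hBq (j+1) t]
      have := hqd t (abs_le.mpr ht)
      have := hε'le' j
      have := hρpos j
      linarith
    have hj0 : (0:ℝ) ≤ (j:ℝ) := Nat.cast_nonneg j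
    have h0mem : (0:ℝ) ∈ Set.Icc (-((j:ℝ)+1)) ((j:ℝ)+1) :=
      Set.mem_Icc.mpr ⟨by linarith, by linarith⟩
    have h₀' : dist (B j 0) (B (j+1) 0) < (ρ j / 2) / 4 := by
      rw [halign j]
      have := hqd 0 (by rw [abs_zero]; linarith)
      have := hε'le' j
      have := hρpos j
      linarith
    have hrig := rigidity hdisc (hBline j).isom.continuous (hBline (j+1)).isom.continuous
      (half_pos (hρpos j)) hrad' hq' h0mem h₀'
    intro t ht
    have h1 := hrig t (abs_le.mp ht)
    rw [hBq j t, hBq (j+1) t] at h1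
    rw [h1]
    exact le_trans (hqd t ht).le (hε'le j)
  -- pointwise limits of the lifts
  have hBcauchy : ∀ t : ℝ, CauchySeq (fun j => B j t) := by
    intro t
    obtain ⟨j₀, hj₀⟩ := exists_nat_ge |t|
    refine cauchySeq_of_tail_geometric (j₀ := j₀) fun j hj => ?_
    refine hsucc j t ?_
    have : (j₀:ℝ) ≤ (j:ℝ) := Nat.cast_le.mpr hj
    linarith
  have hBex : ∀ t : ℝ, ∃ p, Tendsto (fun j => B j t) atTop (𝓝 p) :=
    fun t => cauchySeq_tendsto_of_complete (hBcauchy t)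
  set Blim : ℝ → X := fun t => (hBex t).choose with hBlimdef
  have hBlim : ∀ t, Tendsto (fun j => B j t) atTop (𝓝 (Blim t)) :=
    fun t => (hBex t).choose_spec
  -- the limit is a σ-geodesic line
  have hiso : Isometry Blim := by
    refine Isometry.of_dist_eq fun s t => ?_
    have h1 : Tendsto (fun j => dist (B j s) (B j t)) atTop (𝓝 (dist (Blim s) (Blim t))) :=
      (hBlim s).dist (hBlim t)
    have h2 : (fun j => dist (B j s) (B j t)) = fun _ => dist s t := by
      funext j
      exact (hBline j).isom.dist_eq s t
    rw [h2] at h1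
    exact tendsto_nhds_unique h1 tendsto_const_nhds
  have hseg : ∀ s t : ℝ, s ≤ t → ∀ l ∈ Set.Icc (0:ℝ) 1,
      σ (Blim s) (Blim t) l = Blim (s + l * (t - s)) := by
    intro s t hst l hl
    have h2 : Tendsto (fun j => B j (s + l * (t - s))) atTop (𝓝 (Blim (s + l * (t - s)))) :=
      hBlim _
    have h1 : Tendsto (fun j => B j (s + l * (t - s))) atTop (𝓝 (σ (Blim s) (Blim t) l)) := by
      have heq : (fun j => B j (s + l * (t - s))) = fun j => σ (B j s) (B j t) l := by
        funext j
        exact ((hBline j).seg s t hst l hl).symm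
      rw [heq]
      rw [tendsto_iff_dist_tendsto_zero]
      have hbd : ∀ j, dist (σ (B j s) (B j t) l) (σ (Blim s) (Blim t) l) ≤
          (1 - l) * dist (B j s) (Blim s) + l * dist (B j t) (Blim t) :=
        fun j => sigma_dist_le hGCB _ _ _ _ hl
      have hz : Tendsto (fun j => (1 - l) * dist (B j s) (Blim s)
          + l * dist (B j t) (Blim t)) atTop (𝓝 0) := by
        have hzs := tendsto_iff_dist_tendsto_zero.mp (hBlim s)
        have hzt := tendsto_iff_dist_tendsto_zero.mp (hBlim t)
        have h := (hzs.const_mul (1 - l)).add (hzt.const_mul l)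
        simpa only [mul_zero, add_zero] using h
      exact squeeze_zero (fun j => dist_nonneg) hbd hz
    exact tendsto_nhds_unique h1 h2
  refine ⟨Blim, ⟨hiso, hseg⟩, ?_⟩
  -- the projection of the limit is the limit curve
  have hproj : ∀ t, projQ G (Blim t) = ξ t := by
    intro t
    have hsub : Tendsto (fun j => q (m j) t) atTop (𝓝 (ξ t)) :=
      (hξ t).comp (hmono.tendsto_atTop)
    have hb1 : Tendsto (fun j => dist (Blim t) (B j t)) atTop (𝓝 0) := by
      have h := tendsto_iff_dist_tendsto_zero.mp (hBlim t)
      exact Filter.Tendsto.congr (fun j => dist_comm (B j t) (Blim t)) h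
    have hb2 : Tendsto (fun j => dist (q (m j) t) (ξ t)) atTop (𝓝 0) :=
      tendsto_iff_dist_tendsto_zero.mp hsub
    have hsum : Tendsto (fun j => dist (Blim t) (B j t) + dist (q (m j) t) (ξ t))
        atTop (𝓝 0) := by
      have h := hb1.add hb2
      simpa only [add_zero] using h
    have hle : dist (projQ G (Blim t)) (ξ t) ≤ 0 := by
      refine ge_of_tendsto hsum (Filter.Eventually.of_forall fun j => ?_)
      calc dist (projQ G (Blim t)) (ξ t)
          ≤ dist (projQ G (Blim t)) (projQ G (B j t)) + dist (projQ G (B j t)) (ξ t) :=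
            dist_triangle _ _ _
      _ ≤ dist (Blim t) (B j t) + dist (q (m j) t) (ξ t) := by
            rw [hBq j t]
            refine add_le_add ?_ le_rfl
            have hp := projQ_dist_le G (Blim t) (B j t)
            rwa [hBq j t] at hp
    exact quot_eq_of_dist_eq_zero hdisc (le_antisymm hle dist_nonneg)
  intro t
  rw [hproj t]
  exact tendsto_iff_dist_tendsto_zero.mp (hξ t)

end Main

end Paper
namespace Paper

section FDist

set_option linter.unusedSectionVars false

variable {Y : Type*} [PseudoMetricSpace Y]

lemma fDist_integrable {f : ℝ → ℝ} (hf : AdmissibleF f) (u v : C(ℝ, Y))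
    (hu : ∀ s t : ℝ, dist (u s) (u t) ≤ |s - t|) (hv : ∀ s t : ℝ, dist (v s) (v t) ≤ |s - t|) :
    Integrable (fun s => dist (u s) (v s) * f s) := by
  refine Integrable.mono' ((hf.integrable.const_mul (dist (u 0) (v 0))).add hf.momentIntegrable)
    (((u.continuous.dist v.continuous).mul hf.cont).aestronglyMeasurable) ?_
  refine Filter.Eventually.of_forall fun s => ?_
  have h0 : 0 ≤ dist (u s) (v s) * f s := mul_nonneg dist_nonneg (hf.pos s).le
  rw [Real.norm_of_nonneg h0]
  have h1 : dist (u s) (v s) ≤ dist (u 0) (v 0) + 2 * |s| := by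
    have h2 : dist (u s) (v s) ≤ dist (u s) (u 0) + dist (u 0) (v 0) + dist (v 0) (v s) :=
      dist_triangle4 _ _ _ _
    have h3 := hu s 0
    have h4 := hv 0 s
    simp only [sub_zero, zero_sub, abs_neg] at h3 h4
    linarith
  have h5 : 0 ≤ f s := (hf.pos s).le
  have h6 := mul_le_mul_of_nonneg_right h1 h5
  simp only [Pi.add_apply]
  nlinarith

/-- The `f`-distance controls the sup distance on compact intervals among 1-Lipschitz curves. -/
lemma fDist_controls {f : ℝ → ℝ} (hf : AdmissibleF f) {R ε' : ℝ} (hR : 0 < R) (hε' : 0 < ε') :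
    ∃ ε > 0, ∀ u v : C(ℝ, Y),
      (∀ s t : ℝ, dist (u s) (u t) ≤ |s - t|) → (∀ s t : ℝ, dist (v s) (v t) ≤ |s - t|) →
      fDist f u v < ε → ∀ t : ℝ, |t| ≤ R → dist (u t) (v t) < ε' := by
  have hne : (Set.Icc (-(R+1)) (R+1)).Nonempty := Set.nonempty_Icc.mpr (by linarith)
  obtain ⟨x₀, hx₀mem, hx₀min⟩ := isCompact_Icc.exists_isMinOn hne hf.cont.continuousOn
  set c := f x₀ with hc
  have hcpos : 0 < c := hf.pos x₀
  set M := min ε' 4 with hM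
  have hMpos : 0 < M := lt_min hε' (by norm_num)
  have hM4 : M ≤ 4 := min_le_right _ _
  refine ⟨c * M^2 / 8, by positivity, fun u v hu hv hint t ht => ?_⟩
  have hMε' : M ≤ ε' := min_le_left _ _
  by_contra hcon
  have hηt : M ≤ dist (u t) (v t) := le_trans hMε' (not_lt.mp hcon)
  set η : ℝ → ℝ := fun s => dist (u s) (v s) with hη
  have hηlip : ∀ s : ℝ, η t - 2 * |s - t| ≤ η s := by
    intro s
    have h2 : dist (u t) (v t) ≤ dist (u t) (u s) + dist (u s) (v s) + dist (v s) (v t) :=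
      dist_triangle4 _ _ _ _
    have h3 := hu t s
    have h4 := hv s t
    have h5 : |t - s| = |s - t| := abs_sub_comm t s
    rw [h5] at h3
    simp only [hη]
    linarith
  set J : Set ℝ := if t ≤ 0 then Set.Icc t (t + M/4) else Set.Icc (t - M/4) t with hJ
  have htR := abs_le.mp ht
  have hJsub : J ⊆ Set.Icc (-(R+1)) (R+1) := by
    rw [hJ]
    split_ifs with h
    · exact Set.Icc_subset_Icc (by linarith) (by linarith)
    · exact Set.Icc_subset_Icc (by push_neg at h; linarith) (by linarith)
  have hJdist : ∀ s ∈ J, |s - t| ≤ M / 4 := by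
    intro s hs
    rw [hJ] at hs
    split_ifs at hs with h
    · rw [abs_le]; constructor <;> [linarith [hs.1]; linarith [hs.2]]
    · rw [abs_le]; constructor <;> [linarith [hs.1]; linarith [hs.2]]
  have hJvol : (volume J).toReal = M / 4 := by
    rw [hJ]
    split_ifs
    · rw [Real.volume_Icc, ENNReal.toReal_ofReal (by linarith)]
      ring
    · rw [Real.volume_Icc, ENNReal.toReal_ofReal (by linarith)]
      ring
  have hJmeas : MeasurableSet J := by
    rw [hJ]; split_ifs <;> exact measurableSet_Icc
  have hJfin : volume J ≠ ⊤ := by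
    rw [hJ]; split_ifs <;> exact (measure_Icc_lt_top).ne
  have hlow : ∀ s ∈ J, M/2 * c ≤ η s * f s := by
    intro s hs
    have h1 : M/2 ≤ η s := by
      have := hηlip s
      have := hJdist s hs
      linarith
    have h2 : c ≤ f s := isMinOn_iff.mp hx₀min s (hJsub hs)
    have := hMpos
    nlinarith
  have hinteg : Integrable (fun s => η s * f s) := fDist_integrable hf u v hu hv
  have hge : M/2 * c * (volume J).toReal ≤ ∫ s in J, η s * f s :=
    by have := MeasureTheory.setIntegral_ge_of_const_le hJmeas hJfin hlow hinteg.integrableOn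
       rw [measureReal_def, smul_eq_mul, mul_comm] at this; exact this
  have hle : (∫ s in J, η s * f s) ≤ ∫ s, η s * f s :=
    MeasureTheory.setIntegral_le_integral hinteg (Filter.Eventually.of_forall fun s =>
      mul_nonneg dist_nonneg (hf.pos s).le)
  have hfd : fDist f u v = ∫ s, η s * f s := rfl
  rw [hJvol] at hge
  have : c * M^2/8 ≤ fDist f u v := by
    rw [hfd]
    calc c * M^2/8 = M/2 * c * (M/4) := by ring
    _ ≤ ∫ s in J, η s * f s := hge
    _ ≤ _ := hle
  linarith

end FDist

end Paper
open Paper in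
/-- Let `(X,σ)` be a GCB-space and `Γ = G` a group of `σ`-isometries acting
discretely and freely. Then, for every admissible `f ∈ F`, the metric induced by `f` on
`Loc-Geod_σ(Γ\X)` is complete; moreover `Loc-Geod_σ(Γ\X)` is closed in `Loc-Geod(Γ\X)`. -/
theorem statement_13 {X : Type*} [MetricSpace X] [CompleteSpace X]
    (σ : X → X → ℝ → X) (hGCB : IsGCB σ)
    (G : Type*) [Group G] [MulAction G X] [IsIsometricSMul G X]
    (hdisc : DiscreteAction G X) (hfree : FreeAction G X)
    (hequiv : SigmaEquivariant G σ)
    (f : ℝ → ℝ) (hf : AdmissibleF f) :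
    (∀ u : ℕ → C(ℝ, QuotX G X), (∀ n, u n ∈ LocGeodQuotSet G σ) →
      (∀ ε : ℝ, 0 < ε → ∃ N : ℕ, ∀ m ≥ N, ∀ n ≥ N, fDist f (u m) (u n) < ε) →
      ∃ γ ∈ LocGeodQuotSet G σ, Tendsto (fun n => fDist f (u n) γ) atTop (nhds 0)) ∧
    IsClosed (Subtype.val ⁻¹' LocGeodQuotSet G σ : Set ↥(LocGeodSet (QuotX G X))) := by
  constructor
  · -- completeness of the `f`-metric
    intro u hu hcauchy
    choose β hβmem hβeq using hu
    have hut : ∀ n t, u n t = projQ G (β n t) := by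
      intro n t
      rw [← hβeq n]
      rfl
    have hβline : ∀ n, IsSigmaGeodLine σ ⇑(β n) := hβmem
    have hulip : ∀ n (s t : ℝ), dist (u n s) (u n t) ≤ |s - t| := by
      intro n s t
      rw [hut n s, hut n t]
      have h1 := projQ_dist_le G (β n s) (β n t)
      rw [(hβline n).isom.dist_eq s t, Real.dist_eq] at h1
      exact h1
    -- uniform Cauchy on compacts
    have hC : ∀ R : ℝ, 0 < R → ∀ ε : ℝ, 0 < ε → ∃ N : ℕ, ∀ m ≥ N, ∀ n ≥ N, ∀ t : ℝ,
        |t| ≤ R → dist (projQ G (β m t)) (projQ G (β n t)) < ε := by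
      intro R hR ε hε
      obtain ⟨ε₀, hε₀pos, hε₀⟩ := fDist_controls (Y := QuotX G X) hf hR hε
      obtain ⟨N, hN⟩ := hcauchy ε₀ hε₀pos
      refine ⟨N, fun m hm n hn t ht => ?_⟩
      have := hε₀ (u m) (u n) (hulip m) (hulip n) (hN m hm n hn) t ht
      rwa [hut m t, hut n t] at this
    obtain ⟨B, hBline, hBconv⟩ := main_lift hGCB hdisc hfree hequiv (fun n => ⇑(β n))
      hβline hC
    set Bc : C(ℝ, X) := ⟨B, hBline.isom.continuous⟩ with hBc
    refine ⟨projComp G Bc, ⟨Bc, hBline, rfl⟩, ?_⟩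
    have hγt : ∀ t, (projComp G Bc) t = projQ G (B t) := fun t => rfl
    have hpt : ∀ t, Tendsto (fun n => dist (u n t) (projComp G Bc t)) atTop (𝓝 0) := by
      intro t
      refine Filter.Tendsto.congr (fun n => ?_) (hBconv t)
      rw [hut n t, hγt t]
    obtain ⟨C, hCb⟩ := (hpt 0).bddAbove_range
    have hCb' : ∀ n, dist (u n 0) (projComp G Bc 0) ≤ C :=
      fun n => hCb (Set.mem_range_self n)
    have hγlip : ∀ s t : ℝ, dist (projComp G Bc s) (projComp G Bc t) ≤ |s - t| := by
      intro s t
      have h1 := projQ_dist_le G (B s) (B t)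
      rw [hBline.isom.dist_eq s t, Real.dist_eq] at h1
      exact h1
    have hdom := MeasureTheory.tendsto_integral_of_dominated_convergence
      (F := fun n s => dist (u n s) (projComp G Bc s) * f s)
      (f := fun _ : ℝ => (0:ℝ)) (bound := fun s => C * f s + 2 * |s| * f s)
      (fun n => (((u n).continuous.dist (projComp G Bc).continuous).mul
        hf.cont).aestronglyMeasurable)
      ((hf.integrable.const_mul C).add hf.momentIntegrable)
      (fun n => Filter.Eventually.of_forall fun s => ?_)
      (Filter.Eventually.of_forall fun s => ?_)
    · have h0 : (∫ _ : ℝ, (0:ℝ)) = 0 := integral_zero ℝ ℝ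
      rw [h0] at hdom
      exact hdom
    · -- the domination bound
      have h0 : 0 ≤ dist (u n s) (projComp G Bc s) * f s :=
        mul_nonneg dist_nonneg (hf.pos s).le
      rw [Real.norm_of_nonneg h0]
      have h1 : dist (u n s) (projComp G Bc s) ≤ C + 2 * |s| := by
        have h2 : dist (u n s) (projComp G Bc s) ≤ dist (u n s) (u n 0)
            + dist (u n 0) (projComp G Bc 0) + dist (projComp G Bc 0) (projComp G Bc s) :=
          dist_triangle4 _ _ _ _
        have h3 := hulip n s 0
        have h4 := hγlip 0 s
        have h5 := hCb' n
        simp only [sub_zero, zero_sub, abs_neg] at h3 h4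
        linarith
      have h5 : 0 ≤ f s := (hf.pos s).le
      have h6 := mul_le_mul_of_nonneg_right h1 h5
      show dist ((u n) s) ((projComp G Bc) s) * f s ≤ C * f s + 2 * |s| * f s
      nlinarith
    · -- pointwise convergence
      have h := (hpt s).mul_const (f s)
      simpa using h
  · -- closedness
    have hclosed : IsClosed (LocGeodQuotSet G σ : Set C(ℝ, QuotX G X)) := by
      refine isClosed_of_closure_subset fun δ hδ => ?_
      have hbasis := nhds_basis_uniformity'
        (ContinuousMap.hasBasis_compactConvergenceUniformity
          (α := ℝ) (β := QuotX G X)) (x := δ)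
      rw [mem_closure_iff_nhds_basis hbasis] at hδ
      have hsel : ∀ n : ℕ, ∃ g ∈ LocGeodQuotSet G σ,
          ∀ t ∈ Set.Icc (-((n:ℝ)+1)) ((n:ℝ)+1), dist (δ t) (g t) < 1/((n:ℝ)+1) := by
        intro n
        have hpos : (0:ℝ) < 1/((n:ℝ)+1) := by positivity
        obtain ⟨g, hgS, hgnear⟩ := hδ (Set.Icc (-((n:ℝ)+1)) ((n:ℝ)+1),
          {p : QuotX G X × QuotX G X | dist p.1 p.2 < 1/((n:ℝ)+1)})
          ⟨isCompact_Icc, dist_mem_uniformity hpos⟩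
        exact ⟨g, hgS, fun t ht => hgnear t ht⟩
      choose v hvmem hvnear using hsel
      choose β hβmem hβeq using hvmem
      have hvt : ∀ n t, v n t = projQ G (β n t) := by
        intro n t
        rw [← hβeq n]
        rfl
      have hβline : ∀ n, IsSigmaGeodLine σ ⇑(β n) := hβmem
      have hC : ∀ R : ℝ, 0 < R → ∀ ε : ℝ, 0 < ε → ∃ N : ℕ, ∀ m ≥ N, ∀ n ≥ N, ∀ t : ℝ,
          |t| ≤ R → dist (projQ G (β m t)) (projQ G (β n t)) < ε := by
        intro R hR ε hε
        obtain ⟨N₁, hN₁⟩ := exists_nat_ge R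
        obtain ⟨N₂, hN₂⟩ := exists_nat_one_div_lt (half_pos hε)
        refine ⟨max N₁ N₂, fun m hm n hn t ht => ?_⟩
        have hm1 : (N₁:ℝ) ≤ (m:ℝ) := Nat.cast_le.mpr (le_trans (le_max_left _ _) hm)
        have hn1 : (N₁:ℝ) ≤ (n:ℝ) := Nat.cast_le.mpr (le_trans (le_max_left _ _) hn)
        have htm : t ∈ Set.Icc (-((m:ℝ)+1)) ((m:ℝ)+1) := by
          rw [Set.mem_Icc]
          have := abs_le.mp ht
          constructor <;> linarith
        have htn : t ∈ Set.Icc (-((n:ℝ)+1)) ((n:ℝ)+1) := by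
          rw [Set.mem_Icc]
          have := abs_le.mp ht
          constructor <;> linarith
        have h1 := hvnear m t htm
        have h2 := hvnear n t htn
        rw [hvt m t] at h1
        rw [hvt n t] at h2
        have hm2 : 1/((m:ℝ)+1) ≤ 1/((N₂:ℝ)+1) := by
          apply one_div_le_one_div_of_le (by positivity)
          have : (N₂:ℝ) ≤ (m:ℝ) := Nat.cast_le.mpr (le_trans (le_max_right _ _) hm)
          linarith
        have hn2 : 1/((n:ℝ)+1) ≤ 1/((N₂:ℝ)+1) := by
          apply one_div_le_one_div_of_le (by positivity)
          have : (N₂:ℝ) ≤ (n:ℝ) := Nat.cast_le.mpr (le_trans (le_max_right _ _) hn)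
          linarith
        calc dist (projQ G (β m t)) (projQ G (β n t))
            ≤ dist (projQ G (β m t)) (δ t) + dist (δ t) (projQ G (β n t)) :=
              dist_triangle _ _ _
        _ < 1/((m:ℝ)+1) + 1/((n:ℝ)+1) := by
              rw [dist_comm (projQ G (β m t))]
              exact add_lt_add h1 h2
        _ ≤ 1/((N₂:ℝ)+1) + 1/((N₂:ℝ)+1) := add_le_add hm2 hn2
        _ < ε := by linarith
      obtain ⟨B, hBline, hBconv⟩ := main_lift hGCB hdisc hfree hequiv (fun n => ⇑(β n))
        hβline hC
      set Bc : C(ℝ, X) := ⟨B, hBline.isom.continuous⟩ with hBc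
      have hδeq : projComp G Bc = δ := by
        refine ContinuousMap.ext fun t => ?_
        refine quot_eq_of_dist_eq_zero hdisc (le_antisymm ?_ dist_nonneg)
        obtain ⟨n₀, hn₀⟩ := exists_nat_ge |t|
        have hζ : Tendsto (fun n : ℕ => dist (δ t) (projQ G (β n t))) atTop (𝓝 0) := by
          refine squeeze_zero' (Filter.Eventually.of_forall fun n => dist_nonneg) ?_
            tendsto_one_div_add_atTop_nhds_zero_nat
          refine Filter.eventually_atTop.mpr ⟨n₀, fun n hn => ?_⟩
          have htn : t ∈ Set.Icc (-((n:ℝ)+1)) ((n:ℝ)+1) := by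
            rw [Set.mem_Icc]
            have h1 := abs_le.mp (le_trans (le_refl |t|) (by
              have : (n₀:ℝ) ≤ (n:ℝ) := Nat.cast_le.mpr hn
              linarith : |t| ≤ (n:ℝ)+1))
            exact h1
          have := hvnear n t htn
          rw [hvt n t] at this
          exact this.le
        have hsum : Tendsto (fun n : ℕ => dist (projQ G (β n t)) (projQ G (B t))
            + dist (δ t) (projQ G (β n t))) atTop (𝓝 0) := by
          have h := (hBconv t).add hζ
          simpa only [add_zero] using h
        refine ge_of_tendsto hsum (Filter.Eventually.of_forall fun n => ?_)
        calc dist (projComp G Bc t) (δ t)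
            ≤ dist (projQ G (B t)) (projQ G (β n t)) + dist (projQ G (β n t)) (δ t) :=
              dist_triangle _ _ _
        _ = dist (projQ G (β n t)) (projQ G (B t)) + dist (δ t) (projQ G (β n t)) := by
              rw [dist_comm (projQ G (B t)), dist_comm (projQ G (β n t)) (δ t)]
      exact hδeq ▸ ⟨Bc, hBline, rfl⟩
    exact hclosed.preimage continuous_subtype_val
end
end
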